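/- arXiv:1103.0371 — 7 statements merged into one kernel-verified Lean document; each statement's English description precedes it below -/
import Mathlib

section
/- Let (Ω, ℱ, μ) be a probability space, 2 ≤ p < ∞, θ ∈ (0,1], a < b, n ≥ 1, and c₃ ≥ 0. Let (Y_t)_{t∈[a,b]} be a family of real random variables in L^p(μ) with ‖Y_t − Y_s‖_p ≤ c₃ (∫_s^t (b−r)^{θ−1} dr)^{1/2} for all a ≤ s < t ≤ b. Let (t_k)_{k=0}^n be the θ-net on [a,b] and define S_t := ((t_k − t) Y_{t_{k−1}} + (t − t_{k−1}) Y_{t_k})/(t_k − t_{k−1}) for t ∈ [t_{k−1}, t_k], k = 1, …, n. Then sup_{t∈[a,b]} ‖Y_t − S_t‖_p ≤ c₃ (b−a)^{θ/2} θ^{−1/2} n^{−1/2}. -/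
open MeasureTheory
open scoped ENNReal

/-- The `θ`-net `(t_k^{n,θ})_{k=0}^n` on `[a,b]`:
`t_k := a + (b−a) (1 − (1 − k/n)^{1/θ})`. -/
noncomputable def thetaNet (θ a b : ℝ) (n k : ℕ) : ℝ :=
  a + (b - a) * (1 - (1 - (k : ℝ) / (n : ℝ)) ^ ((1 : ℝ) / θ))

/-- **(C3_l) ⇒ (C6_l), abstract form.** If `(Y_t)_{t ∈ [a,b]} ⊆ L^p(μ)` satisfies
`‖Y_t − Y_s‖_p ≤ c₃ (∫_s^t (b−r)^{θ−1} dr)^{1/2}` for `a ≤ s < t ≤ b`, and `S` denotes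
the piecewise linear interpolation of `Y` over the `θ`-net `(t_k)_{k=0}^n` on `[a,b]`,
then `sup_{t ∈ [a,b]} ‖Y_t − S_t‖_p ≤ c₃ (b−a)^{θ/2} θ^{−1/2} n^{−1/2}`. -/
theorem C3_implies_C6_abstract
    {Ω : Type*} {mΩ : MeasurableSpace Ω} (μ : Measure Ω) [IsProbabilityMeasure μ]
    (p : ℝ≥0∞) (hp1 : 2 ≤ p) (hp2 : p ≠ ∞)
    (a b θ c₃ : ℝ) (hab : a < b) (hθ : θ ∈ Set.Ioc (0 : ℝ) 1) (hc₃ : 0 ≤ c₃)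
    (n : ℕ) (hn : 1 ≤ n)
    (Y : ℝ → Ω → ℝ)
    (hY_Lp : ∀ t ∈ Set.Icc a b, MemLp (Y t) p μ)
    (hY : ∀ s t : ℝ, a ≤ s → s < t → t ≤ b →
      eLpNorm (Y t - Y s) p μ
        ≤ ENNReal.ofReal (c₃ * (∫ r in s..t, (b - r) ^ (θ - 1)) ^ ((1 : ℝ) / 2)))
    (k : ℕ) (hk1 : 1 ≤ k) (hk2 : k ≤ n)
    (t : ℝ) (ht : t ∈ Set.Icc (thetaNet θ a b n (k - 1)) (thetaNet θ a b n k)) :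
    eLpNorm
        (fun ω => Y t ω -
          ((thetaNet θ a b n k - t) * Y (thetaNet θ a b n (k - 1)) ω
            + (t - thetaNet θ a b n (k - 1)) * Y (thetaNet θ a b n k) ω)
            / (thetaNet θ a b n k - thetaNet θ a b n (k - 1))) p μ
      ≤ ENNReal.ofReal
          (c₃ * (b - a) ^ (θ / 2) * θ ^ (-(1 : ℝ) / 2) * (n : ℝ) ^ (-(1 : ℝ) / 2)) := by
  obtain ⟨hθ0, hθ1⟩ := hθ
  have hba : (0 : ℝ) < b - a := sub_pos.mpr hab
  have hn0 : (0 : ℝ) < (n : ℝ) := by exact_mod_cast hn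
  set s0 := thetaNet θ a b n (k - 1) with hs0def
  set s1 := thetaNet θ a b n k with hs1def
  have hkcast : ((k - 1 : ℕ) : ℝ) = (k : ℝ) - 1 := by
    have : (k - 1) + 1 = k := Nat.succ_pred_eq_of_pos hk1
    have := congrArg (fun m : ℕ => (m : ℝ)) this
    push_cast at this
    linarith
  -- basic fractions
  have hfk : (0 : ℝ) ≤ 1 - (k : ℝ) / n := by
    rw [sub_nonneg, div_le_one hn0]
    exact_mod_cast hk2
  have hfk1 : (0 : ℝ) ≤ 1 - ((k - 1 : ℕ) : ℝ) / n := by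
    rw [hkcast]
    have : (k : ℝ) - 1 ≤ n := by
      have : (k : ℝ) ≤ n := by exact_mod_cast hk2
      linarith
    rw [sub_nonneg, div_le_one hn0]
    linarith
  have hfk1le : (1 : ℝ) - ((k - 1 : ℕ) : ℝ) / n ≤ 1 := by
    rw [hkcast]
    have : (0 : ℝ) ≤ ((k : ℝ) - 1) / n := by
      apply div_nonneg _ hn0.le
      have : (1 : ℝ) ≤ (k : ℝ) := by exact_mod_cast hk1
      linarith
    linarith
  have hfkle : (1 : ℝ) - (k : ℝ) / n ≤ 1 := by
    have : (0 : ℝ) ≤ (k : ℝ) / n := div_nonneg (Nat.cast_nonneg k) hn0.le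
    linarith
  have hθinv : (0 : ℝ) < 1 / θ := by positivity
  -- b - net j
  have hbs0 : b - s0 = (b - a) * (1 - ((k - 1 : ℕ) : ℝ) / n) ^ ((1 : ℝ) / θ) := by
    simp only [hs0def, thetaNet]; ring
  have hbs1 : b - s1 = (b - a) * (1 - (k : ℝ) / n) ^ ((1 : ℝ) / θ) := by
    simp only [hs1def, thetaNet]; ring
  have hrpow_nonneg0 : (0 : ℝ) ≤ (1 - ((k - 1 : ℕ) : ℝ) / n) ^ ((1 : ℝ) / θ) :=
    Real.rpow_nonneg hfk1 _
  have hrpow_nonneg1 : (0 : ℝ) ≤ (1 - (k : ℝ) / n) ^ ((1 : ℝ) / θ) :=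
    Real.rpow_nonneg hfk _
  have hrpow_le0 : (1 - ((k - 1 : ℕ) : ℝ) / n) ^ ((1 : ℝ) / θ) ≤ 1 :=
    Real.rpow_le_one hfk1 hfk1le hθinv.le
  -- range of the net
  have has0 : a ≤ s0 := by
    simp only [hs0def, thetaNet]
    nlinarith [hrpow_le0]
  have hs1b : s1 ≤ b := by
    have : (0 : ℝ) ≤ b - s1 := by
      rw [hbs1]; positivity
    linarith
  have hs0b : s0 ≤ b := by
    have : (0 : ℝ) ≤ b - s0 := by rw [hbs0]; positivity
    linarith
  have has1 : a ≤ s1 := le_trans has0 (le_trans ht.1 ht.2)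
  -- strict ordering s0 < s1
  have hs01 : s0 < s1 := by
    have hlt : (1 - (k : ℝ) / n) ^ ((1 : ℝ) / θ)
        < (1 - ((k - 1 : ℕ) : ℝ) / n) ^ ((1 : ℝ) / θ) := by
      apply Real.rpow_lt_rpow hfk _ hθinv
      rw [hkcast]
      have : ((k : ℝ) - 1) / n < (k : ℝ) / n := by
        gcongr <;> linarith
      linarith
    have : b - s1 < b - s0 := by
      rw [hbs0, hbs1]
      exact (mul_lt_mul_iff_right₀ hba).mpr hlt
    linarith
  have hd : (0 : ℝ) < s1 - s0 := sub_pos.mpr hs01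
  -- the powers (b - s_j) ^ θ
  have hpow0 : (b - s0) ^ θ = (b - a) ^ θ * (1 - ((k - 1 : ℕ) : ℝ) / n) := by
    rw [hbs0, Real.mul_rpow hba.le hrpow_nonneg0, ← Real.rpow_mul hfk1,
      one_div_mul_cancel (ne_of_gt hθ0), Real.rpow_one]
  have hpow1 : (b - s1) ^ θ = (b - a) ^ θ * (1 - (k : ℝ) / n) := by
    rw [hbs1, Real.mul_rpow hba.le hrpow_nonneg1, ← Real.rpow_mul hfk]
    rw [one_div_mul_cancel (ne_of_gt hθ0), Real.rpow_one]
  have hpowdiff : (b - s0) ^ θ - (b - s1) ^ θ = (b - a) ^ θ / n := by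
    rw [hpow0, hpow1, hkcast]
    field_simp
    ring
  -- the bound B
  set B := c₃ * (b - a) ^ (θ / 2) * θ ^ (-(1 : ℝ) / 2) * (n : ℝ) ^ (-(1 : ℝ) / 2) with hB
  have hBval : B = c₃ * ((b - a) ^ θ / (n * θ)) ^ ((1 : ℝ) / 2) := by
    rw [hB]
    have h1 : (b - a) ^ θ / ((n : ℝ) * θ) = (b - a) ^ θ * θ⁻¹ * ((n : ℝ))⁻¹ := by
      field_simp
    rw [h1, Real.mul_rpow (by positivity) (by positivity),
      Real.mul_rpow (by positivity) (by positivity),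
      Real.inv_rpow hθ0.le, Real.inv_rpow hn0.le,
      ← Real.rpow_neg hθ0.le, ← Real.rpow_neg hn0.le,
      ← Real.rpow_mul hba.le]
    norm_num
    ring
  have hB0 : 0 ≤ B := by
    rw [hBval]; positivity
  -- key sublemma
  have key : ∀ s u : ℝ, s0 ≤ s → s ≤ u → u ≤ s1 →
      eLpNorm (Y u - Y s) p μ ≤ ENNReal.ofReal B := by
    intro s u hs hsu hus1
    rcases eq_or_lt_of_le hsu with rfl | hlt
    · simp
    have hsb : u ≤ b := le_trans hus1 hs1b
    have has : a ≤ s := le_trans has0 hs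
    refine le_trans (hY s u has hlt hsb) (ENNReal.ofReal_le_ofReal ?_)
    -- compute the integral
    have hint : (∫ r in s..u, (b - r) ^ (θ - 1)) = ((b - s) ^ θ - (b - u) ^ θ) / θ := by
      have h1 : (∫ r in s..u, (b - r) ^ (θ - 1))
          = ∫ x in (b - u)..(b - s), x ^ (θ - 1) := by
        rw [← intervalIntegral.integral_comp_sub_left (fun x => x ^ (θ - 1)) b]
      rw [h1, integral_rpow (Or.inl (by linarith))]
      norm_num
    have hub : (0 : ℝ) ≤ b - u := by linarith
    have hmono1 : (b - s) ^ θ ≤ (b - s0) ^ θ :=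
      Real.rpow_le_rpow (by linarith) (by linarith) hθ0.le
    have hmono2 : (b - s1) ^ θ ≤ (b - u) ^ θ :=
      Real.rpow_le_rpow (by rw [hbs1]; positivity) (by linarith) hθ0.le
    have hmono3 : (b - u) ^ θ ≤ (b - s) ^ θ :=
      Real.rpow_le_rpow hub (by linarith) hθ0.le
    have hIle : (∫ r in s..u, (b - r) ^ (θ - 1)) ≤ (b - a) ^ θ / ((n : ℝ) * θ) := by
      rw [hint]
      rw [div_le_div_iff₀ hθ0 (by positivity)]
      have : ((b - s) ^ θ - (b - u) ^ θ) ≤ (b - s0) ^ θ - (b - s1) ^ θ := by linarith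
      calc ((b - s) ^ θ - (b - u) ^ θ) * ((n : ℝ) * θ)
          ≤ ((b - s0) ^ θ - (b - s1) ^ θ) * ((n : ℝ) * θ) := by
            apply mul_le_mul_of_nonneg_right this (by positivity)
        _ = (b - a) ^ θ / n * (n * θ) := by rw [hpowdiff]
        _ = (b - a) ^ θ * θ := by field_simp
    have hI0 : (0 : ℝ) ≤ ∫ r in s..u, (b - r) ^ (θ - 1) := by
      rw [hint]
      apply div_nonneg _ hθ0.le
      linarith
    rw [hBval]
    apply mul_le_mul_of_nonneg_left _ hc₃
    exact Real.rpow_le_rpow hI0 hIle (by norm_num)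
  -- weights
  set α := (s1 - t) / (s1 - s0) with hα
  set β := (t - s0) / (s1 - s0) with hβ
  have hα0 : 0 ≤ α := div_nonneg (by linarith [ht.2]) hd.le
  have hβ0 : 0 ≤ β := div_nonneg (by linarith [ht.1]) hd.le
  have hαβ : α + β = 1 := by
    rw [hα, hβ]; field_simp; ring
  -- rewrite the function
  have heq : (fun ω => Y t ω -
        ((s1 - t) * Y s0 ω + (t - s0) * Y s1 ω) / (s1 - s0))
      = α • (Y t - Y s0) + β • (Y t - Y s1) := by
    funext ω
    simp only [Pi.add_apply, Pi.smul_apply, Pi.sub_apply, smul_eq_mul, hα, hβ]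
    field_simp
    ring
  -- measurability
  have htab : t ∈ Set.Icc a b := ⟨le_trans has0 ht.1, le_trans ht.2 hs1b⟩
  have hmt : MemLp (Y t) p μ := hY_Lp t htab
  have hm0 : MemLp (Y s0) p μ := hY_Lp s0 ⟨has0, hs0b⟩
  have hm1 : MemLp (Y s1) p μ := hY_Lp s1 ⟨has1, hs1b⟩
  have hp1' : (1 : ℝ≥0∞) ≤ p := le_trans one_le_two hp1
  have hb0 : eLpNorm (Y t - Y s0) p μ ≤ ENNReal.ofReal B := key s0 t le_rfl ht.1 ht.2
  have hb1 : eLpNorm (Y t - Y s1) p μ ≤ ENNReal.ofReal B := by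
    rw [show Y t - Y s1 = -(Y s1 - Y t) by abel, eLpNorm_neg]
    exact key t s1 ht.1 ht.2 le_rfl
  calc eLpNorm (fun ω => Y t ω -
        ((s1 - t) * Y s0 ω + (t - s0) * Y s1 ω) / (s1 - s0)) p μ
      = eLpNorm (α • (Y t - Y s0) + β • (Y t - Y s1)) p μ := by rw [heq]
    _ ≤ eLpNorm (α • (Y t - Y s0)) p μ + eLpNorm (β • (Y t - Y s1)) p μ := by
        apply eLpNorm_add_le
        · exact (((hmt.sub hm0).const_smul α)).aestronglyMeasurable
        · exact (((hmt.sub hm1).const_smul β)).aestronglyMeasurable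
        · exact hp1'
    _ = (‖α‖₊ : ℝ≥0∞) * eLpNorm (Y t - Y s0) p μ
        + (‖β‖₊ : ℝ≥0∞) * eLpNorm (Y t - Y s1) p μ := by
        rw [eLpNorm_const_smul, eLpNorm_const_smul, enorm_eq_nnnorm, enorm_eq_nnnorm]
    _ ≤ ENNReal.ofReal α * ENNReal.ofReal B + ENNReal.ofReal β * ENNReal.ofReal B := by
        rw [← enorm_eq_nnnorm, ← enorm_eq_nnnorm, Real.enorm_eq_ofReal hα0, Real.enorm_eq_ofReal hβ0]
        exact add_le_add (mul_le_mul_right hb0 _) (mul_le_mul_right hb1 _)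
    _ = ENNReal.ofReal B := by
        rw [← ENNReal.ofReal_mul hα0, ← ENNReal.ofReal_mul hβ0,
          ← ENNReal.ofReal_add (by positivity) (by positivity),
          show α * B + β * B = (α + β) * B by ring, hαβ, one_mul]
end

section
/- Let (Ω, ℱ, (ℱ_t)_{t∈[a,b]}, μ) be a filtered probability space, 2 ≤ p < ∞, θ ∈ (0,1], and c₆ ≥ 0. Let (Y_t)_{t∈[a,b]} be an adapted family of real random variables with Y_t ∈ L^p(μ) for all t. Suppose that for every n ≥ 1 there exists an adapted spline S^n = (S^n_t)_{t∈[a,b]} based on the θ-net (t_k^{n,θ})_{k=0}^n on [a,b] such that √n · sup_{t∈[a,b]} ‖Y_t − S^n_t‖_p ≤ c₆. Then there exists a constant c > 0 such that ‖Y_b − E(Y_b|ℱ_t)‖_p ≤ c (b−t)^{θ/2} for all t ∈ [a,b). -/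
open MeasureTheory
open scoped ENNReal

theorem my_eLpNorm_condexp_le {α : Type*} {m m0 : MeasurableSpace α} (hm : m ≤ m0)
    {μ : Measure α} [IsFiniteMeasure μ] {p : ℝ≥0∞} (hp1 : 1 ≤ p) (hp2 : p ≠ ∞)
    {f : α → ℝ} (hf : MemLp f p μ) :
    eLpNorm (μ[f|m]) p μ ≤ eLpNorm f p μ := by
  by_cases hpone : p = 1
  · subst hpone; exact eLpNorm_one_condExp_le_eLpNorm f
  have hp0 : p ≠ 0 := by intro h; rw [h] at hp1; simp at hp1
  set r := p.toReal with hr_def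
  have hr1 : 1 < r := by
    have := (ENNReal.toReal_lt_toReal (by norm_num) hp2).mpr (lt_of_le_of_ne hp1 (Ne.symm hpone))
    simpa using this
  have hr_pos : 0 < r := lt_trans one_pos hr1
  have hr_ne : r ≠ 0 := hr_pos.ne'
  set q : ℝ := r / (r - 1) with hq_def
  have hqr : q.HolderConjugate r := (Real.HolderConjugate.conjExponent hr1).symm
  have hq_pos : 0 < q := hqr.pos
  have hrq : (r - 1) * q = r := by
    rw [hq_def, mul_comm, div_mul_cancel₀ _ (sub_ne_zero.2 hr1.ne')]
  have hf_int : Integrable f μ := hf.integrable hp1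
  have hφ_int : Integrable (fun x => |f x|) μ := hf_int.abs
  set G : α → ℝ := μ[(fun x => |f x|)|m] with hG_def
  have hG_meas : StronglyMeasurable[m] G := stronglyMeasurable_condExp
  have hG_meas0 : Measurable G := (hG_meas.mono hm).measurable
  have hG_int : Integrable G μ := integrable_condExp
  have hG_nonneg : 0 ≤ᵐ[μ] G :=
    condExp_nonneg (ae_of_all μ fun x => abs_nonneg (f x))
  have habs : ∀ᵐ x ∂μ, |(μ[f|m]) x| ≤ G x := by
    filter_upwards [condExp_mono hf_int hφ_int
        (ae_of_all μ (fun x => le_abs_self (f x))),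
      ((condExp_neg f m).symm.le.trans (condExp_mono hf_int.neg hφ_int
        (ae_of_all μ (fun x => neg_le_abs (f x)))))] with x hx₁ hx₂
    exact abs_le.2 ⟨neg_le.1 hx₂, hx₁⟩
  have step1 : eLpNorm (μ[f|m]) p μ ≤ eLpNorm G p μ := by
    refine eLpNorm_mono_ae ?_
    filter_upwards [habs, hG_nonneg] with x h1 h2
    rw [Real.norm_eq_abs, Real.norm_eq_abs, abs_of_nonneg h2]
    exact h1
  refine le_trans step1 ?_
  set B : ℝ≥0∞ := eLpNorm f p μ with hB_def
  have hB_rpow : B ^ r = ∫⁻ x, ENNReal.ofReal (|f x| ^ r) ∂μ := by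
    rw [hB_def, eLpNorm_eq_lintegral_rpow_enorm_toReal hp0 hp2, ← hr_def,
      ← ENNReal.rpow_mul, one_div, inv_mul_cancel₀ hr_ne, ENNReal.rpow_one]
    refine lintegral_congr fun x => ?_
    rw [← Real.norm_eq_abs, ← ofReal_norm,
      ← ENNReal.ofReal_rpow_of_nonneg (norm_nonneg _) hr_pos.le]
  -- truncations
  set GN : ℕ → α → ℝ := fun N x => min (G x) (N : ℝ) with hGN_def
  set I : ℕ → ℝ≥0∞ := fun N => ∫⁻ x, ENNReal.ofReal (GN N x ^ r) ∂μ with hI_def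
  have hGN_measm : ∀ N, Measurable[m] (GN N) :=
    fun N => hG_meas.measurable.min measurable_const
  have hGN_meas0 : ∀ N, Measurable (GN N) := fun N => hG_meas0.min measurable_const
  have hIN_le_B : ∀ N, I N ≤ B ^ r := by
    intro N
    set h : α → ℝ := fun x => GN N x ^ (r - 1 : ℝ) with hh_def
    have hh_measm : StronglyMeasurable[m] h :=
      Measurable.stronglyMeasurable ((hGN_measm N).pow measurable_const)
    have hh_meas0 : Measurable h := (hGN_meas0 N).pow measurable_const
    have hh_bound : ∀ᵐ x ∂μ, ‖h x‖ ≤ (N : ℝ) ^ (r - 1 : ℝ) := by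
      filter_upwards [hG_nonneg] with x hx
      have h0 : 0 ≤ GN N x := le_min hx (Nat.cast_nonneg N)
      rw [hh_def, Real.norm_eq_abs, abs_of_nonneg (Real.rpow_nonneg h0 _)]
      exact Real.rpow_le_rpow h0 (min_le_right _ _) (by linarith)
    have hh_nonneg : ∀ᵐ x ∂μ, 0 ≤ h x := by
      filter_upwards [hG_nonneg] with x hx
      exact Real.rpow_nonneg (le_min hx (Nat.cast_nonneg N)) _
    have key : μ[h * (fun x => |f x|)|m] =ᵐ[μ] h * G :=
      condExp_stronglyMeasurable_mul_of_bound hm hh_measm hφ_int _ hh_bound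
    have hhφ_int : Integrable (fun x => h x * |f x|) μ :=
      hφ_int.bdd_mul (hh_meas0.stronglyMeasurable.aestronglyMeasurable) hh_bound
    have hhG_int : Integrable (fun x => h x * G x) μ :=
      hG_int.bdd_mul (hh_meas0.stronglyMeasurable.aestronglyMeasurable) hh_bound
    have hint_eq : ∫ x, h x * G x ∂μ = ∫ x, h x * |f x| ∂μ := by
      calc ∫ x, h x * G x ∂μ = ∫ x, (μ[h * (fun y => |f y|)|m]) x ∂μ :=
            (integral_congr_ae key).symm
        _ = ∫ x, (h * fun y => |f y|) x ∂μ := integral_condExp hm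
        _ = ∫ x, h x * |f x| ∂μ := rfl
    have c1 : I N ≤ ∫⁻ x, ENNReal.ofReal (h x * G x) ∂μ := by
      refine lintegral_mono_ae ?_
      filter_upwards [hG_nonneg] with x hx
      have h0 : 0 ≤ GN N x := le_min hx (Nat.cast_nonneg N)
      refine ENNReal.ofReal_le_ofReal ?_
      have hsplit : GN N x ^ r = GN N x ^ (r - 1 : ℝ) * GN N x := by
        rcases eq_or_lt_of_le h0 with h0' | h0'
        · rw [← h0', Real.zero_rpow hr_ne,
            Real.zero_rpow (sub_ne_zero.2 hr1.ne'), zero_mul]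
        · nth_rewrite 1 [show r = (r-1) + 1 by ring]
          rw [Real.rpow_add h0', Real.rpow_one]
      rw [hsplit]
      exact mul_le_mul_of_nonneg_left (min_le_left _ _) (Real.rpow_nonneg h0 _)
    have c2 : ∫⁻ x, ENNReal.ofReal (h x * G x) ∂μ = ∫⁻ x, ENNReal.ofReal (h x * |f x|) ∂μ := by
      rw [← ofReal_integral_eq_lintegral_ofReal hhG_int
          (by filter_upwards [hh_nonneg, hG_nonneg] with x hx hx' using mul_nonneg hx hx'),
        hint_eq,
        ofReal_integral_eq_lintegral_ofReal hhφ_int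
          (by filter_upwards [hh_nonneg] with x hx using mul_nonneg hx (abs_nonneg _))]
    have c3 : ∫⁻ x, ENNReal.ofReal (h x * |f x|) ∂μ ≤ (I N) ^ (1 / q) * B ^ (r * (1/r)) := by
      have hφ_aem : AEMeasurable (fun x => ENNReal.ofReal (|f x|)) μ :=
        ENNReal.measurable_ofReal.comp_aemeasurable
          (continuous_abs.measurable.comp_aemeasurable hf.aestronglyMeasurable.aemeasurable)
      have hold := ENNReal.lintegral_mul_le_Lp_mul_Lq μ hqr
        (hh_meas0.ennreal_ofReal.aemeasurable) hφ_aem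
      have e1 : ∫⁻ x, ((fun x => ENNReal.ofReal (h x)) * fun x => ENNReal.ofReal |f x|) x ∂μ
          = ∫⁻ x, ENNReal.ofReal (h x * |f x|) ∂μ := by
        refine lintegral_congr_ae ?_
        filter_upwards [hh_nonneg] with x hx
        simp [ENNReal.ofReal_mul hx]
      have e2 : ∫⁻ x, ENNReal.ofReal (h x) ^ q ∂μ = I N := by
        refine lintegral_congr_ae ?_
        filter_upwards [hG_nonneg] with x hx
        have h0 : 0 ≤ GN N x := le_min hx (Nat.cast_nonneg N)
        simp only [hh_def]
        rw [ENNReal.ofReal_rpow_of_nonneg (Real.rpow_nonneg h0 _) hq_pos.le,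
          ← Real.rpow_mul h0, hrq]
      have e3 : ∫⁻ x, ENNReal.ofReal (|f x|) ^ r ∂μ = B ^ r := by
        rw [hB_rpow]
        refine lintegral_congr fun x => ?_
        rw [← ENNReal.ofReal_rpow_of_nonneg (abs_nonneg _) hr_pos.le]
      rw [e1, e2, e3] at hold
      calc ∫⁻ x, ENNReal.ofReal (h x * |f x|) ∂μ ≤ I N ^ (1/q) * (B ^ r) ^ (1/r) := hold
        _ = (I N) ^ (1 / q) * B ^ (r * (1/r)) := by rw [← ENNReal.rpow_mul]
    have hIN_lt_top : I N ≠ ∞ := by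
      have : I N ≤ ∫⁻ _, ENNReal.ofReal ((N:ℝ) ^ r) ∂μ := by
        refine lintegral_mono_ae ?_
        filter_upwards [hG_nonneg] with x hx
        have h0 : 0 ≤ GN N x := le_min hx (Nat.cast_nonneg N)
        exact ENNReal.ofReal_le_ofReal (Real.rpow_le_rpow h0 (min_le_right _ _) hr_pos.le)
      refine ne_top_of_le_ne_top ?_ this
      rw [lintegral_const]
      exact ENNReal.mul_ne_top ENNReal.ofReal_ne_top (measure_ne_top μ _)
    have hfinal : I N ≤ I N ^ (1/q) * B := by
      have := le_trans (le_trans c1 c2.le) c3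
      rwa [mul_one_div_cancel hr_ne, ENNReal.rpow_one] at this
    by_cases hI0 : I N = 0
    · rw [hI0]; exact zero_le
    · have hsplitI : I N = I N ^ (1/q) * I N ^ (1/r) := by
        rw [← ENNReal.rpow_add _ _ hI0 hIN_lt_top, one_div, one_div,
          hqr.inv_add_inv_eq_one, ENNReal.rpow_one]
      have hq0 : I N ^ (1/q) ≠ 0 := by
        simp [ENNReal.rpow_eq_zero_iff, hI0, hIN_lt_top]
      have hqt : I N ^ (1/q) ≠ ∞ :=
        ENNReal.rpow_ne_top_of_nonneg (by positivity) hIN_lt_top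
      have : I N ^ (1/r) ≤ B := by
        have h2 : I N ^ (1/q) * I N ^ (1/r) ≤ I N ^ (1/q) * B :=
          le_trans hsplitI.symm.le hfinal
        exact (ENNReal.mul_le_mul_iff_right hq0 hqt).mp h2
      calc I N = (I N ^ (1/r)) ^ r := by
            rw [← ENNReal.rpow_mul, one_div, inv_mul_cancel₀ hr_ne, ENNReal.rpow_one]
        _ ≤ B ^ r := ENNReal.rpow_le_rpow this hr_pos.le
  -- monotone convergence
  have hMCT : eLpNorm G p μ ^ r = ⨆ N, I N := by
    have hG_rpow : eLpNorm G p μ ^ r = ∫⁻ x, ENNReal.ofReal (G x ^ r) ∂μ := by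
      rw [eLpNorm_eq_lintegral_rpow_enorm_toReal hp0 hp2, ← hr_def,
        ← ENNReal.rpow_mul, one_div, inv_mul_cancel₀ hr_ne, ENNReal.rpow_one]
      refine lintegral_congr_ae ?_
      filter_upwards [hG_nonneg] with x hx
      rw [← ofReal_norm,
        ENNReal.ofReal_rpow_of_nonneg (norm_nonneg _) hr_pos.le,
        Real.norm_eq_abs, abs_of_nonneg hx]
    have hsup_eq : ∀ᵐ x ∂μ, ENNReal.ofReal (G x ^ r) = ⨆ N, ENNReal.ofReal (GN N x ^ r) := by
      filter_upwards [hG_nonneg] with x hx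
      refine le_antisymm ?_ (iSup_le fun N => ENNReal.ofReal_le_ofReal
        (Real.rpow_le_rpow (le_min hx (Nat.cast_nonneg N)) (min_le_left _ _) hr_pos.le))
      refine le_iSup_of_le ⌈G x⌉₊ (le_of_eq ?_)
      simp only [hGN_def, min_eq_left (Nat.le_ceil (G x))]
    have hmono : ∀ᵐ x ∂μ, Monotone fun N : ℕ => ENNReal.ofReal (GN N x ^ r) := by
      filter_upwards [hG_nonneg] with x hx
      intro N M hNM
      refine ENNReal.ofReal_le_ofReal (Real.rpow_le_rpow (le_min hx (Nat.cast_nonneg N))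
        (min_le_min le_rfl (Nat.cast_le.mpr hNM)) hr_pos.le)
    rw [hG_rpow, lintegral_congr_ae hsup_eq,
      lintegral_iSup' (fun N => ((hGN_meas0 N).pow measurable_const).ennreal_ofReal.aemeasurable)
        hmono]
  have : eLpNorm G p μ ^ r ≤ B ^ r := by
    rw [hMCT]; exact iSup_le hIN_le_B
  calc eLpNorm G p μ = (eLpNorm G p μ ^ r) ^ (1/r) := by
        rw [← ENNReal.rpow_mul, mul_one_div_cancel hr_ne, ENNReal.rpow_one]
    _ ≤ (B ^ r) ^ (1/r) := ENNReal.rpow_le_rpow this (by positivity)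
    _ = B := by rw [← ENNReal.rpow_mul, mul_one_div_cancel hr_ne, ENNReal.rpow_one]

/-- **(C6_l) ⇒ (C4_l), abstract form.** If an adapted `L^p`-family `(Y_t)_{t ∈ [a,b]}`
admits, for every `n ≥ 1`, an adapted spline `S^n` based on the `θ`-net on `[a,b]` with
`√n · sup_{t ∈ [a,b]} ‖Y_t − S^n_t‖_p ≤ c₆`, then there is a constant `c > 0` such that
`‖Y_b − E(Y_b|ℱ_t)‖_p ≤ c (b−t)^{θ/2}` for all `t ∈ [a,b)`. -/
theorem C6_implies_C4_abstract
    {Ω : Type*} {mΩ : MeasurableSpace Ω} (μ : Measure Ω) [IsProbabilityMeasure μ]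
    (p : ℝ≥0∞) (hp1 : 2 ≤ p) (hp2 : p ≠ ∞)
    (a b θ c₆ : ℝ) (hab : a < b) (hθ : θ ∈ Set.Ioc (0 : ℝ) 1) (hc₆ : 0 ≤ c₆)
    (F : ℝ → MeasurableSpace Ω) (hF_le : ∀ t, F t ≤ mΩ)
    (hF_mono : ∀ s t : ℝ, a ≤ s → s ≤ t → t ≤ b → F s ≤ F t)
    (Y : ℝ → Ω → ℝ)
    (hY_adapted : ∀ t ∈ Set.Icc a b, StronglyMeasurable[F t] (Y t))
    (hY_Lp : ∀ t ∈ Set.Icc a b, MemLp (Y t) p μ)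
    (hS : ∀ n : ℕ, 1 ≤ n → ∃ S : ℝ → Ω → ℝ,
      -- `S` has adapted, `L^p` knots at the net points
      (∀ k : ℕ, k ≤ n → MemLp (S (thetaNet θ a b n k)) p μ ∧
        StronglyMeasurable[F (thetaNet θ a b n k)] (S (thetaNet θ a b n k))) ∧
      -- `S` is the linear interpolation of its knots over the net intervals
      (∀ k : ℕ, 1 ≤ k → k ≤ n →
        ∀ t ∈ Set.Icc (thetaNet θ a b n (k - 1)) (thetaNet θ a b n k), ∀ ω : Ω,
          S t ω =
            ((thetaNet θ a b n k - t) * S (thetaNet θ a b n (k - 1)) ω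
              + (t - thetaNet θ a b n (k - 1)) * S (thetaNet θ a b n k) ω)
              / (thetaNet θ a b n k - thetaNet θ a b n (k - 1))) ∧
      -- `√n · sup_{t ∈ [a,b]} ‖Y_t − S^n_t‖_p ≤ c₆`
      ENNReal.ofReal (Real.sqrt n) * (⨆ t ∈ Set.Icc a b, eLpNorm (Y t - S t) p μ)
        ≤ ENNReal.ofReal c₆) :
    ∃ c : ℝ, 0 < c ∧ ∀ t ∈ Set.Ico a b,
      eLpNorm (Y b - μ[Y b|F t]) p μ ≤ ENNReal.ofReal (c * (b - t) ^ (θ / 2)) := by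
  obtain ⟨hθ0, hθ1⟩ := hθ
  have hθne : θ ≠ 0 := hθ0.ne'
  have hba : 0 < b - a := sub_pos.2 hab
  have hp1' : (1:ℝ≥0∞) ≤ p := le_trans (by norm_num) hp1
  have hYb : MemLp (Y b) p μ := hY_Lp b ⟨hab.le, le_rfl⟩
  set M : ℝ := (eLpNorm (Y b) p μ).toReal with hM_def
  have hM0 : 0 ≤ M := ENNReal.toReal_nonneg
  have hMle : eLpNorm (Y b) p μ ≤ ENNReal.ofReal M :=
    le_of_eq (ENNReal.ofReal_toReal hYb.2.ne).symm
  set c : ℝ := (12 * c₆ + 2 * M + 2) * (2 / (b - a)) ^ (θ / 2) with hc_def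
  have hcoef_pos : (0:ℝ) < 12 * c₆ + 2 * M + 2 := by linarith
  have hrp_pos : (0:ℝ) < (2 / (b - a)) ^ (θ / 2) := Real.rpow_pos_of_pos (by positivity) _
  have hc_pos : 0 < c := mul_pos hcoef_pos hrp_pos
  refine ⟨c, hc_pos, ?_⟩
  rintro t ⟨hat, htb⟩
  set δ : ℝ := b - t with hδ_def
  have hδ0 : 0 < δ := sub_pos.2 htb
  have hδba : δ ≤ b - a := by rw [hδ_def]; linarith
  have hm := hF_le t
  by_cases hcase : b - a < 2 * δ
  · -- trivial case : `t` close to `a`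
    have h1 : eLpNorm (Y b - μ[Y b|F t]) p μ
        ≤ ENNReal.ofReal M + ENNReal.ofReal M := by
      refine le_trans (eLpNorm_sub_le hYb.aestronglyMeasurable
        ((stronglyMeasurable_condExp.mono hm).aestronglyMeasurable) hp1') ?_
      exact add_le_add hMle (le_trans (my_eLpNorm_condexp_le hm hp1' hp2 hYb) hMle)
    refine le_trans h1 ?_
    rw [← ENNReal.ofReal_add hM0 hM0]
    refine ENNReal.ofReal_le_ofReal ?_
    have h2 : ((b-a)/2) ^ (θ/2) ≤ δ ^ (θ/2) :=
      Real.rpow_le_rpow (by positivity) (by linarith) (by positivity)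
    have key : c * (((b-a)/2) ^ (θ/2)) = 12 * c₆ + 2 * M + 2 := by
      rw [hc_def, mul_assoc, ← Real.mul_rpow (by positivity) (by positivity)]
      have : (2 / (b - a)) * ((b-a)/2) = 1 := by field_simp
      rw [this, Real.one_rpow, mul_one]
    have h3 : c * (((b-a)/2) ^ (θ/2)) ≤ c * δ ^ (θ/2) :=
      mul_le_mul_of_nonneg_left h2 hc_pos.le
    rw [key] at h3
    linarith
  · -- main case
    push_neg at hcase
    set w : ℝ := (b - a) / (2 * δ) with hw_def
    have hw_pos : 0 < w := by positivity
    have hw1 : 1 ≤ w := (one_le_div (by positivity)).2 hcase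
    set x : ℝ := w ^ θ with hx_def
    have hx1 : 1 ≤ x := by
      rw [hx_def, ← Real.one_rpow θ]
      exact Real.rpow_le_rpow zero_le_one hw1 hθ0.le
    set n : ℕ := ⌊x⌋₊ with hn_def
    have hn1 : 1 ≤ n := Nat.le_floor (by exact_mod_cast hx1)
    have hn_pos : (0:ℝ) < n := by exact_mod_cast hn1
    have hnx : (n:ℝ) ≤ x := Nat.floor_le (le_trans zero_le_one hx1)
    have hx2n : x ≤ 2 * n := by
      have h1 : x < n + 1 := Nat.lt_floor_add_one x
      have h2 : (1:ℝ) ≤ n := by exact_mod_cast hn1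
      linarith
    obtain ⟨S, hknots, hinterp, hsup⟩ := hS n hn1
    -- net values
    have hnn0 : (n:ℝ) ≠ 0 := hn_pos.ne'
    set u : ℝ := ((1:ℝ)/(n:ℝ)) ^ ((1:ℝ)/θ) with hu_def
    have hu_pos : 0 < u := Real.rpow_pos_of_pos (by positivity) _
    have hu1 : u ≤ 1 := Real.rpow_le_one (by positivity)
      (by rw [div_le_one hn_pos]; exact_mod_cast hn1) (by positivity)
    have hnetb : thetaNet θ a b n n = b := by
      rw [thetaNet, div_self hnn0, sub_self, Real.zero_rpow (one_div_ne_zero hθne)]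
      ring
    set s : ℝ := thetaNet θ a b n (n-1) with hs_def
    have hs_eq : s = a + (b-a) * (1 - u) := by
      rw [hs_def, thetaNet, Nat.cast_sub hn1, Nat.cast_one, hu_def]
      have : 1 - ((n:ℝ) - 1)/(n:ℝ) = 1/(n:ℝ) := by field_simp; ring
      rw [this]
    have hbs : b - s = (b-a) * u := by rw [hs_eq]; ring
    have hbs_pos : 0 < b - s := by rw [hbs]; positivity
    have has : a ≤ s := by
      have := mul_nonneg hba.le (by linarith : (0:ℝ) ≤ 1 - u)
      rw [hs_eq]; linarith
    have hnθ : (n:ℝ) ^ ((1:ℝ)/θ) ≤ w := by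
      have h1 : (n:ℝ) ^ ((1:ℝ)/θ) ≤ x ^ ((1:ℝ)/θ) :=
        Real.rpow_le_rpow hn_pos.le hnx (by positivity)
      have h2 : x ^ ((1:ℝ)/θ) = w := by
        rw [hx_def, ← Real.rpow_mul hw_pos.le, mul_one_div_cancel hθne, Real.rpow_one]
      rwa [h2] at h1
    have h2δ : 2*δ ≤ b - s := by
      rw [hbs]
      have hu_ge : 2*δ/(b-a) ≤ u := by
        rw [hu_def, one_div, Real.inv_rpow hn_pos.le]
        have h1 : w⁻¹ ≤ ((n:ℝ) ^ ((1:ℝ)/θ))⁻¹ := by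
          refine inv_anti₀ (Real.rpow_pos_of_pos hn_pos _) hnθ
        have h2 : w⁻¹ = 2*δ/(b-a) := by
          rw [hw_def, inv_div]
        rwa [h2] at h1
      calc 2*δ = (b-a) * (2*δ/(b-a)) := by field_simp
        _ ≤ (b-a) * u := mul_le_mul_of_nonneg_left hu_ge hba.le
    have hst : s ≤ t := by rw [hδ_def] at h2δ; linarith
    -- knot data
    obtain ⟨hSs_mem, hSs_meas⟩ := hknots (n-1) (Nat.sub_le n 1)
    obtain ⟨hSb_mem, hSb_meas⟩ := hknots n le_rfl
    rw [hnetb] at hSb_mem hSb_meas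
    rw [← hs_def] at hSs_mem hSs_meas
    have hinterp' := hinterp n hn1 le_rfl
    rw [hnetb, ← hs_def] at hinterp'
    set la1 : ℝ := (b - t)/(b - s) with hla1_def
    set la2 : ℝ := (t - s)/(b - s) with hla2_def
    have hSt_eq : ∀ ω, S t ω = la1 * S s ω + la2 * S b ω := by
      intro ω
      rw [hinterp' t ⟨hst, htb.le⟩ ω, hla1_def, hla2_def]
      field_simp
    have hla2_half : 1/2 ≤ la2 := by
      rw [hla2_def, le_div_iff₀ hbs_pos]
      rw [hδ_def] at h2δ
      linarith
    have hSt_fun : S t = la1 • S s + la2 • S b := by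
      funext ω
      simpa [Pi.add_apply, Pi.smul_apply, smul_eq_mul] using hSt_eq ω
    have hSt_mem : MemLp (S t) p μ := by
      rw [hSt_fun]
      exact (hSs_mem.const_smul la1).add (hSb_mem.const_smul la2)
    have hYt : MemLp (Y t) p μ := hY_Lp t ⟨hat, htb.le⟩
    -- sup bound
    have hsqrt_pos : 0 < Real.sqrt n := Real.sqrt_pos.2 hn_pos
    set ε : ℝ≥0∞ := ENNReal.ofReal (c₆ / Real.sqrt n) with hε_def
    have hsup' : ∀ t', t' ∈ Set.Icc a b → eLpNorm (Y t' - S t') p μ ≤ ε := by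
      intro t' ht'
      have h1 : ENNReal.ofReal (Real.sqrt n) * eLpNorm (Y t' - S t') p μ
          ≤ ENNReal.ofReal c₆ :=
        le_trans (mul_le_mul_right
          (le_iSup₂ (f := fun t'' (_ : t'' ∈ Set.Icc a b) => eLpNorm (Y t'' - S t'') p μ)
            t' ht') _) hsup
      rw [hε_def, ENNReal.ofReal_div_of_pos hsqrt_pos,
        ENNReal.le_div_iff_mul_le (Or.inl (ENNReal.ofReal_pos.mpr hsqrt_pos).ne')
          (Or.inl ENNReal.ofReal_ne_top)]
      rwa [mul_comm]
    have hYtS : eLpNorm (Y t - S t) p μ ≤ ε := hsup' t ⟨hat, htb.le⟩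
    have hYbS : eLpNorm (Y b - S b) p μ ≤ ε := hsup' b ⟨hab.le, le_rfl⟩
    -- conditional expectation computations
    have hEYt : μ[Y t|F t] = Y t :=
      condExp_of_stronglyMeasurable hm (hY_adapted t ⟨hat, htb.le⟩) (hYt.integrable hp1')
    have hSs_meas' : StronglyMeasurable[F t] (S s) :=
      hSs_meas.mono (hF_mono s t has hst htb.le)
    have hESs : μ[S s|F t] = S s :=
      condExp_of_stronglyMeasurable hm hSs_meas' (hSs_mem.integrable hp1')
    have hESt : μ[S t|F t] =ᵐ[μ] la1 • S s + la2 • μ[S b|F t] := by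
      rw [hSt_fun]
      refine (condExp_add ((hSs_mem.integrable hp1').smul la1)
        ((hSb_mem.integrable hp1').smul la2) (F t)).trans ?_
      refine ((condExp_smul la1 (S s) (F t)).add (condExp_smul la2 (S b) (F t))).trans ?_
      rw [hESs]
    set D : Ω → ℝ := S b - μ[S b|F t] with hD_def
    have hA1 : S t - μ[S t|F t] =ᵐ[μ] la2 • D := by
      filter_upwards [hESt] with ω hω
      simp only [Pi.sub_apply, hω, hSt_eq ω, hD_def, Pi.add_apply, Pi.smul_apply, smul_eq_mul]
      ring
    have hA2 : eLpNorm (S t - μ[S t|F t]) p μ ≤ ε + ε := by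
      have h1 : μ[Y t - S t|F t] =ᵐ[μ] Y t - μ[S t|F t] := by
        refine (condExp_sub (hYt.integrable hp1') (hSt_mem.integrable hp1') (F t)).trans ?_
        rw [hEYt]
      have hdecomp : S t - μ[S t|F t] =ᵐ[μ] (S t - Y t) + μ[Y t - S t|F t] := by
        filter_upwards [h1] with ω hω
        simp only [Pi.sub_apply, Pi.add_apply, hω]
        ring
      rw [eLpNorm_congr_ae hdecomp]
      refine le_trans (eLpNorm_add_le (hSt_mem.sub hYt).aestronglyMeasurable
        (stronglyMeasurable_condExp.mono hm).aestronglyMeasurable hp1') ?_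
      refine add_le_add ?_ ?_
      · rw [eLpNorm_sub_comm]; exact hYtS
      · exact le_trans (my_eLpNorm_condexp_le hm hp1' hp2 (hYt.sub hSt_mem)) hYtS
    have hD_bound : eLpNorm D p μ ≤ 2 * (ε + ε) := by
      have hsmul : eLpNorm (la2 • D) p μ = (‖la2‖₊ : ℝ≥0∞) * eLpNorm D p μ := by
        simp [eLpNorm_const_smul, ENNReal.smul_def]; rfl
      have hla2_nonneg : (0:ℝ) ≤ la2 := by linarith
      have hhalf : ENNReal.ofReal (1/2) ≤ (‖la2‖₊ : ℝ≥0∞) := by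
        rw [← enorm_eq_nnnorm, ← ofReal_norm, Real.norm_eq_abs, abs_of_nonneg hla2_nonneg]
        exact ENNReal.ofReal_le_ofReal hla2_half
      have h1 : ENNReal.ofReal (1/2) * eLpNorm D p μ ≤ ε + ε := by
        refine le_trans (mul_le_mul_left hhalf _) ?_
        rw [← hsmul, ← eLpNorm_congr_ae hA1]
        exact hA2
      have h2 : ENNReal.ofReal (1/2) = (2:ℝ≥0∞)⁻¹ := by
        rw [show (1/2:ℝ) = (2:ℝ)⁻¹ by norm_num, ENNReal.ofReal_inv_of_pos (by norm_num),
          ENNReal.ofReal_ofNat]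
      rw [h2] at h1
      exact (ENNReal.inv_mul_le_iff (by norm_num) (by norm_num)).mp h1
    have hfinal_decomp : Y b - μ[Y b|F t] =ᵐ[μ] ((Y b - S b) - μ[Y b - S b|F t]) + D := by
      have h1 : μ[Y b - S b|F t] =ᵐ[μ] μ[Y b|F t] - μ[S b|F t] :=
        condExp_sub (hYb.integrable hp1') (hSb_mem.integrable hp1') (F t)
      filter_upwards [h1] with ω hω
      simp only [Pi.sub_apply, Pi.add_apply, hω, hD_def]
      ring
    have hmain : eLpNorm (Y b - μ[Y b|F t]) p μ ≤ (ε + ε) + 2 * (ε + ε) := by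
      rw [eLpNorm_congr_ae hfinal_decomp]
      refine le_trans (eLpNorm_add_le
        ((hYb.sub hSb_mem).aestronglyMeasurable.sub
          (stronglyMeasurable_condExp.mono hm).aestronglyMeasurable)
        (hSb_mem.aestronglyMeasurable.sub
          (stronglyMeasurable_condExp.mono hm).aestronglyMeasurable) hp1') ?_
      refine add_le_add ?_ hD_bound
      refine le_trans (eLpNorm_sub_le (hYb.sub hSb_mem).aestronglyMeasurable
        (stronglyMeasurable_condExp.mono hm).aestronglyMeasurable hp1') ?_
      exact add_le_add hYbS
        (le_trans (my_eLpNorm_condexp_le hm hp1' hp2 (hYb.sub hSb_mem)) hYbS)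
    refine le_trans hmain ?_
    have hsix : (ε + ε) + 2 * (ε + ε) = ENNReal.ofReal (6 * (c₆ / Real.sqrt n)) := by
      have : (ε + ε) + 2 * (ε + ε) = 6 * ε := by ring
      rw [this, hε_def, ENNReal.ofReal_mul (by norm_num : (0:ℝ) ≤ 6), ENNReal.ofReal_ofNat]
    rw [hsix]
    refine ENNReal.ofReal_le_ofReal ?_
    -- the real-number estimate
    have hsqx : Real.sqrt x = w ^ (θ/2) := by
      rw [Real.sqrt_eq_rpow, hx_def, ← Real.rpow_mul hw_pos.le, mul_one_div]
    have hwrp_pos : 0 < w ^ (θ/2) := Real.rpow_pos_of_pos hw_pos _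
    have hsn : w ^ (θ/2) ≤ Real.sqrt 2 * Real.sqrt n := by
      rw [← hsqx, ← Real.sqrt_mul (by norm_num : (0:ℝ) ≤ 2)]
      exact Real.sqrt_le_sqrt hx2n
    have hsqrt2 : Real.sqrt 2 ≤ 2 := by
      have h := Real.sqrt_le_sqrt (by norm_num : (2:ℝ) ≤ 4)
      rwa [show (4:ℝ) = 2^2 by norm_num, Real.sqrt_sq (by norm_num : (0:ℝ) ≤ 2)] at h
    have h6 : 6 * (c₆ / Real.sqrt n) ≤ (12 * c₆) / w ^ (θ/2) := by
      rw [mul_div_assoc' 6 c₆ _, div_le_div_iff₀ hsqrt_pos hwrp_pos]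
      calc 6 * c₆ * (w ^ (θ/2)) ≤ 6 * c₆ * (Real.sqrt 2 * Real.sqrt n) :=
            mul_le_mul_of_nonneg_left hsn (by positivity)
        _ = 6 * Real.sqrt 2 * (c₆ * Real.sqrt (n:ℝ)) := by ring
        _ ≤ 6 * 2 * (c₆ * Real.sqrt (n:ℝ)) := by
            refine mul_le_mul_of_nonneg_right (by linarith)
              (mul_nonneg hc₆ (Real.sqrt_nonneg _))
        _ = 12 * c₆ * Real.sqrt (n:ℝ) := by ring
    have h7 : (12 * c₆) / w ^ (θ/2) = 12 * c₆ * ((2/(b-a)) ^ (θ/2) * δ ^ (θ/2)) := by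
      rw [div_eq_mul_inv, ← Real.inv_rpow hw_pos.le]
      have h8 : w⁻¹ = (2/(b-a)) * δ := by
        rw [hw_def, inv_div]; ring
      rw [h8, Real.mul_rpow (by positivity) hδ0.le]
    refine le_trans h6 ?_
    rw [h7, hc_def]
    have h9 : (0:ℝ) ≤ (2/(b-a)) ^ (θ/2) * δ ^ (θ/2) := by positivity
    calc 12 * c₆ * ((2/(b-a)) ^ (θ/2) * δ ^ (θ/2))
        ≤ (12 * c₆ + 2 * M + 2) * ((2/(b-a)) ^ (θ/2) * δ ^ (θ/2)) :=
          mul_le_mul_of_nonneg_right (by linarith) h9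
      _ = (12 * c₆ + 2 * M + 2) * (2/(b-a)) ^ (θ/2) * δ ^ (θ/2) := by ring
end

section
/- Let (Ω, ℱ, (ℱ_t)_{t∈[a,b]}, μ) be a filtered probability space, 2 ≤ p < ∞, θ ∈ (0,1], and c₇ ≥ 0. Let (Y_t)_{t∈[a,b]} be an adapted family of real random variables with Y_t ∈ L^p(μ) for all t, and suppose that for every t ∈ [a,b) one has sup_{n≥1} √n · e_n({Y_s : s ∈ [t,b]} | L^p(μ)) ≤ c₇ (b−t)^{θ/2}. Then ‖Y_b − E(Y_b|ℱ_t)‖_p ≤ 4 c₇ (b−t)^{θ/2} for all t ∈ [a,b). -/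
open MeasureTheory
open scoped ENNReal

/-- The `n`-th entropy number of a set `A` in a (semi)normed space `E`:
`e_n(A|E) = inf { ε > 0 : A can be covered by n closed balls of radius ε }`,
with value in `ℝ≥0∞` (so `e_n(A|E) = ∞` if no finite cover exists). -/
noncomputable def entropyNumber {E : Type*} [SeminormedAddCommGroup E]
    (n : ℕ) (A : Set E) : ℝ≥0∞ :=
  sInf {ε : ℝ≥0∞ | ∃ x : Fin n → E, ∀ a ∈ A, ∃ i, edist a (x i) ≤ ε}


lemma tangent_le {q : ℝ} (hq : 2 ≤ q) (r x : ℝ) :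
    |r| ^ q + q * (|r| ^ (q - 2) * r) * (x - r) ≤ |x| ^ q := by
  have hq0 : q ≠ 0 := by positivity
  rcases eq_or_ne r 0 with rfl | hr
  · simp [Real.zero_rpow hq0, Real.rpow_nonneg (abs_nonneg x)]
  · have ha : 0 < |r| := abs_pos.2 hr
    set a := |r| with haa
    have hB := one_add_mul_self_le_rpow_one_add (s := |x| / a - 1)
      (by have := div_nonneg (abs_nonneg x) ha.le; linarith) (p := q) (by linarith)
    rw [show (1 : ℝ) + (|x| / a - 1) = |x| / a by ring] at hB
    have hdiv : (|x| / a) ^ q = |x| ^ q / a ^ q := Real.div_rpow (abs_nonneg x) ha.le q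
    have haq : 0 < a ^ q := Real.rpow_pos_of_pos ha q
    have he2 : a ^ (q - 1) = a ^ q / a := by
      rw [Real.rpow_sub ha, Real.rpow_one]
    have h1 : a ^ q + q * (a ^ (q - 1) * |x| - a ^ q) ≤ |x| ^ q := by
      calc a ^ q + q * (a ^ (q - 1) * |x| - a ^ q)
          = a ^ q * (1 + q * (|x| / a - 1)) := by rw [he2]; field_simp
        _ ≤ a ^ q * (|x| / a) ^ q := mul_le_mul_of_nonneg_left hB haq.le
        _ = |x| ^ q := by rw [hdiv]; field_simp
    have h3 : a ^ (q - 2) * a = a ^ (q - 1) := by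
      rw [← Real.rpow_add_one ha.ne']; congr 1; ring
    have h4 : a ^ (q - 2) * (a * a) = a ^ q := by
      have haa2 : a * a = a ^ (2:ℝ) := by rw [Real.rpow_two]; ring
      rw [haa2, ← Real.rpow_add ha]
      congr 1; ring
    have hnn : (0 : ℝ) ≤ a ^ (q - 2) := Real.rpow_nonneg ha.le _
    have hxr : r * x ≤ a * |x| := by
      calc r * x ≤ |r * x| := le_abs_self _
        _ = a * |x| := abs_mul r x
    have hr2 : r * r = a * a := (abs_mul_abs_self r).symm
    have h2 : (a ^ (q - 2) * r) * (x - r) ≤ a ^ (q - 1) * |x| - a ^ q := by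
      have hmul := mul_le_mul_of_nonneg_left hxr hnn
      have h5 : a ^ (q - 2) * a * |x| = a ^ (q - 1) * |x| := by rw [h3]
      have h6 : a ^ (q - 2) * (r * r) = a ^ (q - 2) * (a * a) := by rw [hr2]
      nlinarith [hmul, h4, h5, h6]
    have hqpos : (0 : ℝ) ≤ q := by linarith
    nlinarith [mul_le_mul_of_nonneg_left h2 hqpos, h1]

lemma tangent_continuous {q : ℝ} (hq : 2 ≤ q) (x : ℝ) :
    Continuous (fun r : ℝ => |r| ^ q + q * (|r| ^ (q - 2) * r) * (x - r)) := by
  have h1 : Continuous fun r : ℝ => |r| ^ q :=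
    continuous_abs.rpow_const (fun r => Or.inr (by linarith))
  have h2 : Continuous fun r : ℝ => |r| ^ (q - 2) :=
    continuous_abs.rpow_const (fun r => Or.inr (by linarith))
  exact h1.add (((continuous_const.mul (h2.mul continuous_id)).mul
    (continuous_const.sub continuous_id)))


lemma eLpNorm_condexp_le_of_memLp {Ω : Type*} {m mΩ : MeasurableSpace Ω} (hm : m ≤ mΩ)
    {μ : Measure Ω} [IsProbabilityMeasure μ] {p : ℝ≥0∞} (hp2 : 2 ≤ p) (hpt : p ≠ ∞)
    {f : Ω → ℝ} (hf : MemLp f p μ) :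
    eLpNorm (μ[f|m]) p μ ≤ eLpNorm f p μ := by
  haveI : IsFiniteMeasure (μ.trim hm) := isFiniteMeasure_trim hm
  set q := p.toReal with hqdef
  have hq2 : 2 ≤ q := by
    have := ENNReal.toReal_mono hpt hp2
    simpa using this
  have hp1 : (1 : ℝ≥0∞) ≤ p := le_trans (by norm_num) hp2
  have hp0 : p ≠ 0 := (zero_lt_one.trans_le hp1).ne'
  have hq0 : (0 : ℝ) < q := by linarith
  have hfi : Integrable f μ := hf.integrable hp1
  set φ := fun ω => ‖f ω‖ ^ q with hφdef
  have hφi : Integrable φ μ := hf.integrable_norm_rpow hp0 hpt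
  have hφnn : 0 ≤ᵐ[μ] φ := .of_forall fun ω => Real.rpow_nonneg (norm_nonneg _) _
  set g := μ[f|m] with hgdef
  set h := μ[φ|m] with hhdef
  have hhnn : 0 ≤ᵐ[μ] h := condExp_nonneg hφnn
  have key : ∀ r : ℚ, ∀ᵐ ω ∂μ,
      |(r:ℝ)| ^ q + q * (|(r:ℝ)| ^ (q - 2) * (r:ℝ)) * (g ω - r) ≤ h ω := by
    intro r
    set c : ℝ := q * (|(r:ℝ)| ^ (q - 2) * (r:ℝ)) with hcdef
    set d : ℝ := |(r:ℝ)| ^ q - c * r with hddef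
    have hpt' : (fun ω => d + c * f ω) ≤ᵐ[μ] φ := .of_forall fun ω => by
      have := tangent_le hq2 (r:ℝ) (f ω)
      simp only [hφdef, Real.norm_eq_abs]
      have hd : d + c * f ω = |(r:ℝ)| ^ q + c * (f ω - r) := by rw [hddef]; ring
      rw [hd]; exact this
    have hint1 : Integrable (fun ω => d + c * f ω) μ :=
      (integrable_const d).add (hfi.const_mul c)
    have hmono := condExp_mono (m := m) hint1 hφi hpt'
    have hlin : μ[fun ω => d + c * f ω|m] =ᵐ[μ] fun ω => d + c * g ω := by
      have heq : (fun ω => d + c * f ω) = (fun _ => d) + c • f := by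
        funext ω; simp [smul_eq_mul]
      rw [heq]
      have h1 := condExp_add (μ := μ) (m := m) (integrable_const d) (hfi.smul c)
      have h2 := condExp_smul (μ := μ) (m := m) c f
      have h3 := condExp_const hm d (μ := μ)
      filter_upwards [h1, h2] with ω h1ω h2ω
      simp only [Pi.add_apply, Pi.smul_apply, smul_eq_mul] at *
      rw [h1ω, h2ω, h3]
    filter_upwards [hmono, hlin] with ω h₁ h₂
    have : d + c * g ω ≤ h ω := by rw [← h₂]; exact h₁
    have hd : d + c * g ω = |(r:ℝ)| ^ q + c * (g ω - r) := by rw [hddef]; ring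
    rw [hd] at this
    exact this
  have hae : ∀ᵐ ω ∂μ, |g ω| ^ q ≤ h ω := by
    have keyall := ae_all_iff.2 key
    filter_upwards [keyall] with ω hω
    set S : Set ℝ := {r : ℝ | |r| ^ q + q * (|r| ^ (q - 2) * r) * (g ω - r) ≤ h ω} with hS
    have hcl : IsClosed S := isClosed_le (tangent_continuous hq2 (g ω)) continuous_const
    have hsub : Set.range ((↑) : ℚ → ℝ) ⊆ S := by
      rintro y ⟨r, rfl⟩; exact hω r
    have huniv : (Set.univ : Set ℝ) ⊆ S := by
      have := hcl.closure_subset_iff.2 hsub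
      rwa [Rat.denseRange_cast.closure_eq] at this
    have hmem : g ω ∈ S := huniv trivial
    simp only [hS, Set.mem_setOf_eq, sub_self, mul_zero, add_zero] at hmem
    exact hmem
  rw [eLpNorm_eq_lintegral_rpow_enorm_toReal hp0 hpt, eLpNorm_eq_lintegral_rpow_enorm_toReal hp0 hpt]
  refine ENNReal.rpow_le_rpow ?_ (by positivity)
  calc ∫⁻ ω, (‖g ω‖₊ : ℝ≥0∞) ^ q ∂μ
      ≤ ∫⁻ ω, ENNReal.ofReal (h ω) ∂μ := by
        refine lintegral_mono_ae ?_
        filter_upwards [hae] with ω hω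
        have : ((‖g ω‖₊ : ℝ≥0∞)) ^ q = ENNReal.ofReal (|g ω| ^ q) := by
          rw [← enorm_eq_nnnorm, ← ofReal_norm, Real.norm_eq_abs,
            ENNReal.ofReal_rpow_of_nonneg (abs_nonneg _) hq0.le]
        rw [this]
        exact ENNReal.ofReal_le_ofReal hω
    _ = ENNReal.ofReal (∫ ω, h ω ∂μ) :=
        (ofReal_integral_eq_lintegral_ofReal integrable_condExp hhnn).symm
    _ = ENNReal.ofReal (∫ ω, φ ω ∂μ) := by rw [hhdef, integral_condExp hm]
    _ = ∫⁻ ω, ENNReal.ofReal (φ ω) ∂μ := ofReal_integral_eq_lintegral_ofReal hφi hφnn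
    _ = ∫⁻ ω, (‖f ω‖₊ : ℝ≥0∞) ^ q ∂μ := by
        refine lintegral_congr fun ω => ?_
        rw [← enorm_eq_nnnorm, ← ofReal_norm,
          ENNReal.ofReal_rpow_of_nonneg (norm_nonneg _) hq0.le]

/-- **(C7_l) ⇒ (C4_l), abstract form.** If an adapted `L^p`-family `(Y_t)_{t ∈ [a,b]}`
satisfies `sup_{n ≥ 1} √n · e_n({Y_s : s ∈ [t,b]} | L^p(μ)) ≤ c₇ (b−t)^{θ/2}` for every
`t ∈ [a,b)`, then `‖Y_b − E(Y_b|ℱ_t)‖_p ≤ 4 c₇ (b−t)^{θ/2}` for all `t ∈ [a,b)`. -/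
theorem C7_implies_C4_abstract
    {Ω : Type*} {mΩ : MeasurableSpace Ω} (μ : Measure Ω) [IsProbabilityMeasure μ]
    (p : ℝ≥0∞) [Fact (1 ≤ p)] (hp1 : 2 ≤ p) (hp2 : p ≠ ∞)
    (a b θ c₇ : ℝ) (hab : a < b) (hθ : θ ∈ Set.Ioc (0 : ℝ) 1) (hc₇ : 0 ≤ c₇)
    (F : ℝ → MeasurableSpace Ω) (hF_le : ∀ t, F t ≤ mΩ)
    (hF_mono : ∀ s t : ℝ, a ≤ s → s ≤ t → t ≤ b → F s ≤ F t)
    (Y : ℝ → Ω → ℝ)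
    (hY_adapted : ∀ t ∈ Set.Icc a b, StronglyMeasurable[F t] (Y t))
    (hY_Lp : ∀ t ∈ Set.Icc a b, MemLp (Y t) p μ)
    (hEnt : ∀ t ∈ Set.Ico a b, ∀ n : ℕ, 1 ≤ n →
      ENNReal.ofReal (Real.sqrt n) *
          entropyNumber n {g : Lp ℝ p μ | ∃ s ∈ Set.Icc t b, (g : Ω → ℝ) =ᵐ[μ] Y s}
        ≤ ENNReal.ofReal (c₇ * (b - t) ^ (θ / 2))) :
    ∀ t ∈ Set.Ico a b,
      eLpNorm (Y b - μ[Y b|F t]) p μ ≤ ENNReal.ofReal (4 * c₇ * (b - t) ^ (θ / 2)) := by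
  intro t ht
  have hp1' : (1 : ℝ≥0∞) ≤ p := le_trans (by norm_num) hp1
  have htb : t < b := ht.2
  have htmem : t ∈ Set.Icc a b := ⟨ht.1, htb.le⟩
  have hbmem : b ∈ Set.Icc a b := ⟨hab.le, le_rfl⟩
  have hYb := hY_Lp b hbmem
  have hYt := hY_Lp t htmem
  set C : ℝ := c₇ * (b - t) ^ (θ / 2) with hCdef
  set A : Set (Lp ℝ p μ) := {g : Lp ℝ p μ | ∃ s ∈ Set.Icc t b, (g : Ω → ℝ) =ᵐ[μ] Y s}
    with hAdef
  -- entropy number with n = 1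
  have hE : entropyNumber 1 A ≤ ENNReal.ofReal C := by
    have := hEnt t ht 1 le_rfl
    simp at this; exact this
  set fb : Lp ℝ p μ := hYb.toLp (Y b) with hfb
  set ft : Lp ℝ p μ := hYt.toLp (Y t) with hft
  have hfbA : fb ∈ A := ⟨b, ⟨htb.le, le_rfl⟩, hYb.coeFn_toLp⟩
  have hftA : ft ∈ A := ⟨t, ⟨le_rfl, htb.le⟩, hYt.coeFn_toLp⟩
  have hedist : edist fb ft ≤ 2 * entropyNumber 1 A := by
    have hhalf : edist fb ft / 2 ≤ entropyNumber 1 A := by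
      refine le_sInf fun ε hε => ?_
      obtain ⟨x, hx⟩ := hε
      obtain ⟨i, hi⟩ := hx fb hfbA
      obtain ⟨j, hj⟩ := hx ft hftA
      have hij : i = j := Subsingleton.elim i j
      have htri : edist fb ft ≤ ε + ε := by
        calc edist fb ft ≤ edist fb (x i) + edist (x i) ft := edist_triangle _ _ _
          _ ≤ ε + ε := by
              refine add_le_add hi ?_
              rw [hij, edist_comm]; exact hj
      rw [ENNReal.div_le_iff_le_mul (Or.inl two_ne_zero) (Or.inl ENNReal.ofNat_ne_top)]
      calc edist fb ft ≤ ε + ε := htri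
        _ = ε * 2 := by ring
    rw [ENNReal.div_le_iff_le_mul (Or.inl two_ne_zero) (Or.inl ENNReal.ofNat_ne_top)] at hhalf
    calc edist fb ft ≤ entropyNumber 1 A * 2 := hhalf
      _ = 2 * entropyNumber 1 A := mul_comm _ _
  have hD : eLpNorm (Y b - Y t) p μ ≤ 2 * ENNReal.ofReal C := by
    have heq : eLpNorm (Y b - Y t) p μ = edist fb ft := by
      rw [Lp.edist_def]
      refine (eLpNorm_congr_ae ?_).symm
      have h2 : (fb : Ω → ℝ) =ᵐ[μ] Y b := hYb.coeFn_toLp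
      have h3 : (ft : Ω → ℝ) =ᵐ[μ] Y t := hYt.coeFn_toLp
      filter_upwards [Lp.coeFn_sub fb ft, h2, h3] with ω e1 e2 e3
      simp only [Pi.sub_apply] at *
      rw [e2, e3]
    rw [heq]
    exact hedist.trans (mul_le_mul_right hE 2)
  -- conditional expectation manipulation
  haveI : IsFiniteMeasure (μ.trim (hF_le t)) := isFiniteMeasure_trim (hF_le t)
  have hYt_int : Integrable (Y t) μ := hYt.integrable hp1'
  have hYb_int : Integrable (Y b) μ := hYb.integrable hp1'
  have h1 : μ[Y t|F t] = Y t :=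
    condExp_of_stronglyMeasurable (hF_le t) (hY_adapted t htmem) hYt_int
  have h2 : μ[Y b - Y t|F t] =ᵐ[μ] μ[Y b|F t] - μ[Y t|F t] := condExp_sub hYb_int hYt_int (F t)
  have hrw : (Y b - μ[Y b|F t]) =ᵐ[μ] (Y b - Y t) - μ[Y b - Y t|F t] := by
    filter_upwards [h2] with ω hω2
    simp only [Pi.sub_apply] at *
    rw [hω2, h1]; ring
  have hsub_mem : MemLp (Y b - Y t) p μ := hYb.sub hYt
  calc eLpNorm (Y b - μ[Y b|F t]) p μ
      = eLpNorm ((Y b - Y t) - μ[Y b - Y t|F t]) p μ := eLpNorm_congr_ae hrw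
    _ ≤ eLpNorm (Y b - Y t) p μ + eLpNorm (μ[Y b - Y t|F t]) p μ :=
        eLpNorm_sub_le hsub_mem.aestronglyMeasurable
          (stronglyMeasurable_condExp.mono (hF_le t)).aestronglyMeasurable hp1'
    _ ≤ eLpNorm (Y b - Y t) p μ + eLpNorm (Y b - Y t) p μ :=
        add_le_add le_rfl (eLpNorm_condexp_le_of_memLp (hF_le t) hp1 hp2 hsub_mem)
    _ ≤ 2 * ENNReal.ofReal C + 2 * ENNReal.ofReal C := add_le_add hD hD
    _ = ENNReal.ofReal (4 * c₇ * (b - t) ^ (θ / 2)) := by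
        rw [← two_mul, ← mul_assoc]
        norm_num
        rw [← ENNReal.ofReal_ofNat, ← ENNReal.ofReal_mul (by norm_num)]
        congr 1
        ring
end

section
/- Let (Ω, ℱ, μ) be a probability space, 2 ≤ p < ∞, θ ∈ (0,1], a < b, and c₃ ≥ 0. Let (Y_t)_{t∈[a,b]} be a family of real random variables in L^p(μ) with ‖Y_t − Y_s‖_p ≤ c₃ (∫_s^t (b−r)^{θ−1} dr)^{1/2} for all a ≤ s < t ≤ b. Then for every t ∈ [a,b) and every n ≥ 1 one has e_n({Y_s : s ∈ [t,b]} | L^p(μ)) ≤ √2 · c₃ θ^{−1/2} (b−t)^{θ/2} n^{−1/2}. -/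
open MeasureTheory
open scoped ENNReal

set_option maxHeartbeats 1000000 in
private lemma C3C7_integral_eval (b θ : ℝ) (hθ : 0 < θ) (s u : ℝ) :
    ∫ r in s..u, (b - r) ^ (θ - 1) = ((b - s) ^ θ - (b - u) ^ θ) / θ := by
  rw [intervalIntegral.integral_comp_sub_left (fun x => x ^ (θ - 1)) b,
      integral_rpow (Or.inl (by linarith)), sub_add_cancel]

set_option maxHeartbeats 2000000 in
/-- **(C3_l) ⇒ (C7_l), abstract form.** If `(Y_t)_{t ∈ [a,b]} ⊆ L^p(μ)` satisfies
`‖Y_t − Y_s‖_p ≤ c₃ (∫_s^t (b−r)^{θ−1} dr)^{1/2}` for `a ≤ s < t ≤ b`, then for every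
`t ∈ [a,b)` and `n ≥ 1` one has
`e_n({Y_s : s ∈ [t,b]} | L^p(μ)) ≤ √2 · c₃ θ^{−1/2} (b−t)^{θ/2} n^{−1/2}`. -/
theorem C3_implies_C7_abstract
    {Ω : Type*} {mΩ : MeasurableSpace Ω} (μ : Measure Ω) [IsProbabilityMeasure μ]
    (p : ℝ≥0∞) [Fact (1 ≤ p)] (hp1 : 2 ≤ p) (hp2 : p ≠ ∞)
    (a b θ c₃ : ℝ) (hab : a < b) (hθ : θ ∈ Set.Ioc (0 : ℝ) 1) (hc₃ : 0 ≤ c₃)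
    (Y : ℝ → Ω → ℝ)
    (hY_Lp : ∀ t ∈ Set.Icc a b, MemLp (Y t) p μ)
    (hY : ∀ s t : ℝ, a ≤ s → s < t → t ≤ b →
      eLpNorm (Y t - Y s) p μ
        ≤ ENNReal.ofReal (c₃ * (∫ r in s..t, (b - r) ^ (θ - 1)) ^ ((1 : ℝ) / 2)))
    (t : ℝ) (ht : t ∈ Set.Ico a b) (n : ℕ) (hn : 1 ≤ n) :
    entropyNumber n {g : Lp ℝ p μ | ∃ s ∈ Set.Icc t b, (g : Ω → ℝ) =ᵐ[μ] Y s}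
      ≤ ENNReal.ofReal
          (Real.sqrt 2 * c₃ * θ ^ (-(1 : ℝ) / 2) * (b - t) ^ (θ / 2)
            * (n : ℝ) ^ (-(1 : ℝ) / 2)) := by
  obtain ⟨hθ0, hθ1⟩ := hθ
  obtain ⟨hat, htb⟩ := ht
  have hd : (0 : ℝ) < b - t := by linarith
  have hn0 : (0 : ℝ) < n := by exact_mod_cast hn
  -- the net points
  set T : ℕ → ℝ := fun k => b - (b - t) * (1 - (k : ℝ) / n) ^ θ⁻¹ with hTdef
  have hTle : ∀ k : ℕ, (k : ℕ) ≤ n → t ≤ T k ∧ T k ≤ b := by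
    intro k hk
    have h0 : (0 : ℝ) ≤ 1 - (k : ℝ) / n := by
      rw [sub_nonneg, div_le_one hn0]; exact_mod_cast hk
    have h1 : (1 - (k : ℝ) / n) ^ θ⁻¹ ≤ 1 :=
      Real.rpow_le_one h0 (by
        rw [sub_le_self_iff]; positivity) (by positivity)
    have h2 : (0 : ℝ) ≤ (1 - (k : ℝ) / n) ^ θ⁻¹ := Real.rpow_nonneg h0 _
    constructor
    · simp only [hTdef]; nlinarith
    · simp only [hTdef]; nlinarith
  have hTmem : ∀ k : ℕ, k ≤ n → T k ∈ Set.Icc a b := fun k hk =>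
    ⟨le_trans hat (hTle k hk).1, (hTle k hk).2⟩
  have hTpow : ∀ k : ℕ, k ≤ n → (b - T k) ^ θ = (b - t) ^ θ * (1 - (k : ℝ) / n) := by
    intro k hk
    have h0 : (0 : ℝ) ≤ 1 - (k : ℝ) / n := by
      rw [sub_nonneg, div_le_one hn0]; exact_mod_cast hk
    have : b - T k = (b - t) * (1 - (k : ℝ) / n) ^ θ⁻¹ := by simp [hTdef]
    rw [this, Real.mul_rpow hd.le (Real.rpow_nonneg h0 _),
      Real.rpow_inv_rpow h0 hθ0.ne']
  -- the covering
  apply sInf_le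
  refine ⟨fun i => (hY_Lp (T i) (hTmem i i.isLt.le)).toLp (Y (T i)), ?_⟩
  rintro g ⟨s, ⟨hts, hsb⟩, hg⟩
  set q : ℝ := (b - s) / (b - t) with hqdef
  have hq0 : 0 ≤ q := div_nonneg (by linarith) hd.le
  have hq1 : q ≤ 1 := by rw [hqdef, div_le_one hd]; linarith
  have hqθ0 : 0 ≤ q ^ θ := Real.rpow_nonneg hq0 _
  have hqθ1 : q ^ θ ≤ 1 := Real.rpow_le_one hq0 hq1 hθ0.le
  set u : ℝ := (1 - q ^ θ) * n with hudef
  have hu0 : 0 ≤ u := by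
    have h : (0:ℝ) ≤ 1 - q ^ θ := by linarith
    exact mul_nonneg h hn0.le
  have hun : u ≤ n := by nlinarith
  set k : ℕ := min (n - 1) ⌊u⌋₊ with hkdef
  have hkn : k < n := by
    have : k ≤ n - 1 := min_le_left _ _
    omega
  have hk1 : (k : ℝ) ≤ u := by
    refine le_trans ?_ (Nat.floor_le hu0)
    exact_mod_cast min_le_right (n-1) ⌊u⌋₊
  have hk2 : u ≤ (k : ℝ) + 1 := by
    rcases le_or_gt ⌊u⌋₊ (n - 1) with h | h
    · have : k = ⌊u⌋₊ := by omega
      rw [this]; exact (Nat.lt_floor_add_one u).le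
    · have : k = n - 1 := by omega
      rw [this]
      have : ((n - 1 : ℕ) : ℝ) + 1 = n := by
        have : (1:ℕ) ≤ n := hn
        push_cast [Nat.cast_sub this]; ring
      rw [this]; exact hun
  -- (b - s)^θ bounds
  have hbs : b - s = (b - t) * q := by have := hd.ne'; rw [hqdef]; field_simp
  have hbsθ : (b - s) ^ θ = (b - t) ^ θ * q ^ θ := by
    rw [hbs, Real.mul_rpow hd.le hq0]
  have hq_up : q ^ θ ≤ 1 - (k : ℝ) / n := by
    rw [le_sub_iff_add_le, ← le_sub_iff_add_le', div_le_iff₀ hn0]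
    nlinarith
  have hTk_le_s : T k ≤ s := by
    have h0 : (0 : ℝ) ≤ 1 - (k : ℝ) / n := le_trans hqθ0 hq_up
    have hmon : q ≤ (1 - (k : ℝ) / n) ^ θ⁻¹ := by
      calc q = (q ^ θ) ^ θ⁻¹ := (Real.rpow_rpow_inv hq0 hθ0.ne').symm
        _ ≤ (1 - (k : ℝ) / n) ^ θ⁻¹ :=
          Real.rpow_le_rpow hqθ0 hq_up (by positivity)
    have : b - s ≤ (b - t) * (1 - (k : ℝ) / n) ^ θ⁻¹ := by
      rw [hbs]; nlinarith
    simp only [hTdef]; linarith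
  -- the key quantitative bound
  have hq_dn : 1 - ((k : ℝ) + 1) / n ≤ q ^ θ := by
    have h : (1 - q ^ θ) * (n : ℝ) ≤ (k : ℝ) + 1 := by rw [← hudef]; exact hk2
    have h2 : 1 - q ^ θ ≤ ((k : ℝ) + 1) / n := by rw [le_div_iff₀ hn0]; exact h
    linarith
  have hbt : (0:ℝ) ≤ (b - t) ^ θ := Real.rpow_nonneg hd.le _
  have hkey : ((b - T k) ^ θ - (b - s) ^ θ) * n ≤ (b - t) ^ θ := by
    rw [hTpow k hkn.le, hbsθ]
    have e : ((1:ℝ) - (k : ℝ) / n) * n = (n : ℝ) - k := by field_simp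
    have hdn' : (n : ℝ) - ((k : ℝ) + 1) ≤ q ^ θ * n := by
      have := mul_le_mul_of_nonneg_right hq_dn hn0.le
      have e2 : (1 - ((k : ℝ) + 1) / n) * n = (n : ℝ) - ((k : ℝ) + 1) := by field_simp
      linarith [e2 ▸ this]
    calc ((b - t) ^ θ * (1 - (k : ℝ) / n) - (b - t) ^ θ * q ^ θ) * n
        = (b - t) ^ θ * (((1:ℝ) - (k : ℝ) / n) * n - q ^ θ * n) := by ring
      _ = (b - t) ^ θ * (((n : ℝ) - k) - q ^ θ * n) := by rw [e]
      _ ≤ (b - t) ^ θ * 1 := by nlinarith [hdn', hbt]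
      _ = (b - t) ^ θ := mul_one _
  -- and the distance estimate
  clear_value k u q
  refine ⟨⟨k, hkn⟩, ?_⟩
  rw [Lp.edist_def]
  have hcoe : (⇑g - ⇑((hY_Lp (T k) (hTmem k hkn.le)).toLp (Y (T k)))) =ᵐ[μ]
      Y s - Y (T k) := hg.sub (MemLp.coeFn_toLp _)
  rw [eLpNorm_congr_ae hcoe]
  rcases eq_or_lt_of_le hTk_le_s with heq | hlt
  · rw [← heq, sub_self]
    simp
  · refine le_trans (hY (T k) s (hTmem k hkn.le).1 hlt hsb) ?_
    apply ENNReal.ofReal_le_ofReal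
    rw [C3C7_integral_eval b θ hθ0]
    set I : ℝ := ((b - T k) ^ θ - (b - s) ^ θ) / θ with hIdef
    have hI0 : 0 ≤ I := by
      have hbs0 : (0:ℝ) ≤ b - s := by linarith
      have : (b - s) ^ θ ≤ (b - T k) ^ θ :=
        Real.rpow_le_rpow hbs0 (by linarith) hθ0.le
      have : (0:ℝ) ≤ (b - T k) ^ θ - (b - s) ^ θ := by linarith
      positivity
    have hIJ : I ≤ (b - t) ^ θ / (n * θ) := by
      rw [hIdef, div_le_div_iff₀ hθ0 (by positivity)]
      calc ((b - T k) ^ θ - (b - s) ^ θ) * ((n : ℝ) * θ)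
          = (((b - T k) ^ θ - (b - s) ^ θ) * n) * θ := by ring
        _ ≤ (b - t) ^ θ * θ := mul_le_mul_of_nonneg_right hkey hθ0.le
    have hEq : ((b - t) ^ θ / ((n : ℝ) * θ)) ^ ((1:ℝ)/2)
        = (b - t) ^ (θ/2) * (θ ^ (-(1:ℝ)/2) * (n : ℝ) ^ (-(1:ℝ)/2)) := by
      rw [show (b - t) ^ θ / ((n : ℝ) * θ) = (b - t) ^ θ * (θ⁻¹ * ((n:ℝ))⁻¹) by
            rw [div_eq_mul_inv, mul_inv_rev],
          Real.mul_rpow (Real.rpow_nonneg hd.le _) (by positivity),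
          Real.mul_rpow (by positivity) (by positivity),
          ← Real.rpow_mul hd.le,
          Real.inv_rpow hθ0.le, Real.inv_rpow hn0.le,
          ← Real.rpow_neg hθ0.le, ← Real.rpow_neg hn0.le,
          show θ * ((1:ℝ)/2) = θ/2 by ring,
          show -((1:ℝ)/2) = -(1:ℝ)/2 by ring]
    have hsqrt : (1:ℝ) ≤ Real.sqrt 2 := by
      rw [show (1:ℝ) = Real.sqrt 1 by simp]
      exact Real.sqrt_le_sqrt (by norm_num)
    calc c₃ * I ^ ((1:ℝ)/2)
        ≤ c₃ * ((b - t) ^ θ / ((n : ℝ) * θ)) ^ ((1:ℝ)/2) := by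
          exact mul_le_mul_of_nonneg_left
            (Real.rpow_le_rpow hI0 hIJ (by norm_num)) hc₃
      _ = c₃ * ((b - t) ^ (θ/2) * (θ ^ (-(1:ℝ)/2) * (n : ℝ) ^ (-(1:ℝ)/2))) := by
          rw [hEq]
      _ = 1 * (c₃ * θ ^ (-(1:ℝ)/2) * (b - t) ^ (θ/2) * (n : ℝ) ^ (-(1:ℝ)/2)) := by
          ring
      _ ≤ Real.sqrt 2 * (c₃ * θ ^ (-(1:ℝ)/2) * (b - t) ^ (θ/2) * (n : ℝ) ^ (-(1:ℝ)/2)) := by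
          apply mul_le_mul_of_nonneg_right hsqrt
          have h1 : (0:ℝ) ≤ (b - t) ^ (θ/2) := Real.rpow_nonneg hd.le _
          have h2 : (0:ℝ) ≤ θ ^ (-(1:ℝ)/2) := Real.rpow_nonneg hθ0.le _
          have h3 : (0:ℝ) ≤ (n:ℝ) ^ (-(1:ℝ)/2) := Real.rpow_nonneg hn0.le _
          exact mul_nonneg (mul_nonneg (mul_nonneg hc₃ h2) h1) h3
      _ = Real.sqrt 2 * c₃ * θ ^ (-(1:ℝ)/2) * (b - t) ^ (θ/2) * (n : ℝ) ^ (-(1:ℝ)/2) := by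
          ring
end

section
/- Let a < b be real numbers, 1 ≤ p < ∞, λ > 0, and let R : [a,b) → [0,∞) be a measurable function such that R(s) ≤ 2 R(r) whenever a ≤ r ≤ s < b. Then for every s ∈ ((a+b)/2, b) one has R(s)^p ≤ 2^{p+λ} (b−s)^{λ−1} ∫_a^b (b−r)^{−λ} R(r)^p dr, where the integral is the Lebesgue integral (possibly +∞). -/
open MeasureTheory
open scoped ENNReal

/-- **Local decay from global weighted integrability of a doubling function.**
Let `1 ≤ p < ∞`, `λ > 0` and let `R : [a,b) → [0,∞)` be measurable with
`R(s) ≤ 2 R(r)` whenever `a ≤ r ≤ s < b`. Then for every `s ∈ ((a+b)/2, b)`,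
`R(s)^p ≤ 2^{p+λ} (b−s)^{λ−1} ∫_a^b (b−r)^{−λ} R(r)^p dr`
(the integral being a Lebesgue integral, possibly `+∞`). -/
theorem doubling_global_to_local_decay
    (a b p lam : ℝ) (hab : a < b) (hp : 1 ≤ p) (hlam : 0 < lam)
    (R : ℝ → ℝ) (hR_meas : Measurable R)
    (hR_nonneg : ∀ r ∈ Set.Ico a b, 0 ≤ R r)
    (hR_doubling : ∀ r s : ℝ, a ≤ r → r ≤ s → s < b → R s ≤ 2 * R r)
    (s : ℝ) (hs1 : (a + b) / 2 < s) (hs2 : s < b) :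
    ENNReal.ofReal (R s ^ p)
      ≤ ENNReal.ofReal ((2 : ℝ) ^ (p + lam) * (b - s) ^ (lam - 1)) *
          ∫⁻ r in Set.Ioo a b, ENNReal.ofReal ((b - r) ^ (-lam) * R r ^ p) := by
  have h2 : (0:ℝ) < 2 := two_pos
  have hx : (0:ℝ) < b - s := by linarith
  have has : a < s := by linarith
  have hy : 0 ≤ R s := hR_nonneg s ⟨has.le, hs2⟩
  set x := b - s with hxdef
  set y := R s with hydef
  set c : ℝ≥0∞ := ENNReal.ofReal ((2*x) ^ (-lam) * (y/2) ^ p) with hcdef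
  have hsub : Set.Ioo (2*s - b) s ⊆ Set.Ioo a b :=
    Set.Ioo_subset_Ioo (by linarith) hs2.le
  -- lower bound for the integrand on (2s-b, s)
  have hbound : ∀ r ∈ Set.Ioo (2*s - b) s,
      c ≤ ENNReal.ofReal ((b - r) ^ (-lam) * R r ^ p) := by
    intro r hr
    apply ENNReal.ofReal_le_ofReal
    have har : a ≤ r := by have := hr.1; linarith
    have hrb : r < b := lt_trans hr.2 hs2
    have hRr : 0 ≤ R r := hR_nonneg r ⟨har, hrb⟩
    have hdb : R s ≤ 2 * R r := hR_doubling r s har hr.2.le hs2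
    have h1 : (y/2) ^ p ≤ R r ^ p :=
      Real.rpow_le_rpow (by positivity) (by rw [hydef]; linarith) (by linarith)
    have hbr : (0:ℝ) < b - r := by linarith
    have hle : b - r ≤ 2 * x := by rw [hxdef]; have := hr.1; linarith
    have h2' : (2*x) ^ (-lam) ≤ (b - r) ^ (-lam) :=
      Real.rpow_le_rpow_of_nonpos hbr hle (neg_nonpos.mpr hlam.le)
    exact mul_le_mul h2' h1 (by positivity) (by positivity)
  have hmeas : Measurable fun r : ℝ => ENNReal.ofReal ((b - r) ^ (-lam) * R r ^ p) := by
    exact (((measurable_const.sub measurable_id).pow measurable_const).mul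
      (hR_meas.pow measurable_const)).ennreal_ofReal
  have key : c * ENNReal.ofReal x
      ≤ ∫⁻ r in Set.Ioo a b, ENNReal.ofReal ((b - r) ^ (-lam) * R r ^ p) := by
    calc c * ENNReal.ofReal x
        = ∫⁻ _ in Set.Ioo (2*s - b) s, c := by
          rw [setLIntegral_const, Real.volume_Ioo]
          congr 1
          rw [hxdef]; ring_nf
      _ ≤ ∫⁻ r in Set.Ioo (2*s - b) s, ENNReal.ofReal ((b - r) ^ (-lam) * R r ^ p) :=
          setLIntegral_mono hmeas hbound
      _ ≤ ∫⁻ r in Set.Ioo a b, ENNReal.ofReal ((b - r) ^ (-lam) * R r ^ p) :=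
          lintegral_mono_set hsub
  -- the algebraic identity
  have alg : (2:ℝ) ^ (p + lam) * x ^ (lam - 1) * ((2*x) ^ (-lam) * (y/2) ^ p * x)
      = y ^ p := by
    rw [Real.mul_rpow h2.le hx.le, Real.div_rpow hy h2.le,
        show x ^ (lam - 1) = x ^ lam * x ^ (-1:ℝ) from by
          rw [← Real.rpow_add hx]; ring_nf,
        Real.rpow_add h2, Real.rpow_neg hx.le lam, Real.rpow_neg h2.le lam,
        Real.rpow_neg hx.le 1, Real.rpow_one]
    have hxlam : x ^ lam ≠ 0 := (Real.rpow_pos_of_pos hx lam).ne'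
    have h2lam : (2:ℝ) ^ lam ≠ 0 := (Real.rpow_pos_of_pos h2 lam).ne'
    have h2p : (2:ℝ) ^ p ≠ 0 := (Real.rpow_pos_of_pos h2 p).ne'
    field_simp
  calc ENNReal.ofReal (y ^ p)
      = ENNReal.ofReal ((2:ℝ) ^ (p + lam) * x ^ (lam - 1)) * (c * ENNReal.ofReal x) := by
        rw [hcdef, ← ENNReal.ofReal_mul (by positivity), ← ENNReal.ofReal_mul (by positivity)]
        congr 1
        rw [← alg]; try ring
    _ ≤ ENNReal.ofReal ((2:ℝ) ^ (p + lam) * x ^ (lam - 1)) *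
          ∫⁻ r in Set.Ioo a b, ENNReal.ofReal ((b - r) ^ (-lam) * R r ^ p) :=
        mul_le_mul_right key _
end

section
/- Let (Ω, ℱ, μ) be a probability space, 1 ≤ p < ∞, a < b, θ ∈ (0,1], θ' ∈ (0,θ), and c₁ ≥ 0. Let (Z_t)_{t∈[a,b)} be a family of ℝ^d-valued random variables in L^p(μ) with ‖Z_t − Z_s‖_p ≤ c₁ (∫_s^t (b−r)^{θ−2} dr)^{1/2} for all a ≤ s < t < b. For n ≥ 1 let (t_k)_{k=0}^n be the θ'-net on [a,b]. Then there exists a constant C > 0, depending only on c₁, θ, θ' and b−a, such that for all n ≥ 1 one has Σ_{k=1}^n ∫_{t_{k−1}}^{t_k} ‖Z_t − Z_{t_{k−1}}‖_p² dt ≤ C/n, where the k = n summand is the integral over [t_{n−1}, b). -/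
open MeasureTheory
open scoped ENNReal



/-- Mean value theorem for rpow. -/
lemma mvt_rpow {z y : ℝ} (r : ℝ) (hz : 0 < z) (hzy : z < y) :
    ∃ ξ ∈ Set.Ioo z y, y ^ r - z ^ r = r * ξ ^ (r - 1) * (y - z) := by
  obtain ⟨ξ, hξ, hs⟩ := exists_hasDerivAt_eq_slope (fun x : ℝ => x ^ r)
    (fun x => r * x ^ (r - 1)) hzy
    (by
      apply ContinuousOn.rpow_const continuousOn_id
      intro x hx
      exact Or.inl (hz.trans_le hx.1).ne')
    (fun x hx => Real.hasDerivAt_rpow_const (Or.inl (hz.trans hx.1).ne'))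
  refine ⟨ξ, hξ, ?_⟩
  rw [hs, div_mul_cancel₀ _ (sub_ne_zero.mpr hzy.ne')]

lemma rpow_sub_le_of_one_le {z y q : ℝ} (hz : 0 < z) (hzy : z < y) (hq : 1 ≤ q) :
    y ^ q - z ^ q ≤ q * y ^ (q - 1) * (y - z) := by
  obtain ⟨ξ, hξ, he⟩ := mvt_rpow q hz hzy
  rw [he]
  have hξ0 : (0:ℝ) ≤ ξ := (hz.trans hξ.1).le
  have : ξ ^ (q - 1) ≤ y ^ (q - 1) := Real.rpow_le_rpow hξ0 hξ.2.le (by linarith)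
  have h2 : (0:ℝ) ≤ q := by linarith
  have h3 : (0:ℝ) ≤ y - z := by linarith
  exact mul_le_mul_of_nonneg_right (mul_le_mul_of_nonneg_left this h2) h3

lemma rpow_sub_le_of_nonpos {z y γ : ℝ} (hz : 0 < z) (hzy : z < y) (hγ : γ ≤ 0) :
    z ^ γ - y ^ γ ≤ (-γ) * z ^ (γ - 1) * (y - z) := by
  obtain ⟨ξ, hξ, he⟩ := mvt_rpow γ hz hzy
  have h1 : z ^ γ - y ^ γ = (-γ) * ξ ^ (γ - 1) * (y - z) := by linarith [he]
  rw [h1]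
  have : ξ ^ (γ - 1) ≤ z ^ (γ - 1) :=
    Real.rpow_le_rpow_of_nonpos hz hξ.1.le (by linarith)
  have h2 : (0:ℝ) ≤ -γ := by linarith
  have h3 : (0:ℝ) ≤ y - z := by linarith
  exact mul_le_mul_of_nonneg_right (mul_le_mul_of_nonneg_left this h2) h3

lemma sum_rpow_le {β : ℝ} (hβ : -1 < β) (n : ℕ) (hn : 1 ≤ n) :
    ∑ j ∈ Finset.Icc 1 n, (j : ℝ) ^ β ≤ (1 + 1/(β+1)) * (n:ℝ) ^ (β+1) := by
  have hn0 : (0:ℝ) < n := by exact_mod_cast hn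
  have hβ1 : (0:ℝ) < β + 1 := by linarith
  rcases le_or_gt 0 β with hβ0 | hβ0
  · -- each term ≤ n^β
    calc ∑ j ∈ Finset.Icc 1 n, (j : ℝ) ^ β
        ≤ ∑ _j ∈ Finset.Icc 1 n, (n:ℝ) ^ β := by
          refine Finset.sum_le_sum fun j hj => ?_
          have := (Finset.mem_Icc.mp hj).2
          exact Real.rpow_le_rpow (by positivity) (by exact_mod_cast this) hβ0
      _ = n * (n:ℝ) ^ β := by
          rw [Finset.sum_const, Nat.card_Icc]
          simp [nsmul_eq_mul]
      _ = (n:ℝ) ^ (β + 1) := by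
          rw [Real.rpow_add_one hn0.ne']
          ring
      _ ≤ (1 + 1/(β+1)) * (n:ℝ) ^ (β+1) := by
          have h1 : (1:ℝ) ≤ 1 + 1/(β+1) := by
            have : (0:ℝ) < 1/(β+1) := by positivity
            linarith
          nlinarith [Real.rpow_nonneg hn0.le (β+1)]
  · -- β < 0 : compare to integral
    have hone : (1:ℝ) ≤ (n:ℝ) ^ (β+1) := Real.one_le_rpow (by exact_mod_cast hn) hβ1.le
    have hanti : AntitoneOn (fun x : ℝ => x ^ β) (Set.Icc (1:ℝ) (1 + (n-1 : ℕ))) := by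
      intro x hx y hy hxy
      exact Real.rpow_le_rpow_of_nonpos (lt_of_lt_of_le one_pos hx.1) hxy hβ0.le
    have hkey := hanti.sum_le_integral
    have hsplit : ∑ j ∈ Finset.Icc 1 n, (j : ℝ) ^ β
        = 1 + ∑ i ∈ Finset.range (n-1), ((1:ℝ) + ((i+1 : ℕ) : ℝ)) ^ β := by
      have : Finset.Icc 1 n = Finset.Ico 1 (n+1) := by rw [Finset.Ico_add_one_right_eq_Icc]
      rw [this, Finset.sum_Ico_eq_sum_range]
      have hn' : n + 1 - 1 = (n-1) + 1 := by omega
      rw [hn', Finset.sum_range_succ']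
      push_cast
      rw [add_comm]
      norm_num
    rw [hsplit]
    have hint : ∫ x in (1:ℝ)..(1 + (n-1:ℕ)), x ^ β = ((n:ℝ) ^ (β+1) - 1)/(β+1) := by
      have hcast : (1:ℝ) + (n-1:ℕ) = (n:ℝ) := by
        have : ((n-1:ℕ):ℝ) = (n:ℝ) - 1 := by
          have := Nat.cast_sub hn (R := ℝ)
          simpa using this
        rw [this]; ring
      rw [hcast, integral_rpow (Or.inl hβ)]
      rw [Real.one_rpow]
    calc 1 + ∑ i ∈ Finset.range (n-1), ((1:ℝ) + ((i+1 : ℕ) : ℝ)) ^ β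
        ≤ 1 + ((n:ℝ) ^ (β+1) - 1)/(β+1) := by
          have := hkey.trans_eq hint
          linarith
      _ ≤ (1 + 1/(β+1)) * (n:ℝ) ^ (β+1) := by
          have e : (1 + 1/(β+1)) * (n:ℝ)^(β+1) - (1 + ((n:ℝ)^(β+1) - 1)/(β+1))
              = ((n:ℝ)^(β+1) - 1) + 1/(β+1) := by
            field_simp
            ring
          have h3 : (0:ℝ) < 1/(β+1) := by positivity
          linarith [e, hone]

lemma thetaNet_sub (θ' a b : ℝ) (n k : ℕ) :
    b - thetaNet θ' a b n k = (b - a) * (1 - (k:ℝ)/(n:ℝ)) ^ ((1:ℝ)/θ') := by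
  unfold thetaNet; ring

lemma net_real_bound (a b θ' c : ℝ) (hab : a < b) (hθ'0 : 0 < θ') (hθ'c : θ' < c)
    (hc1 : c < 1) :
    ∃ K : ℝ, 0 < K ∧ ∀ n : ℕ, 1 ≤ n →
      (∑ k ∈ Finset.Icc 1 (n-1),
        (thetaNet θ' a b n k - thetaNet θ' a b n (k-1)) *
          ((b - thetaNet θ' a b n k) ^ (c-1) - (b - thetaNet θ' a b n (k-1)) ^ (c-1)))
        + (b - thetaNet θ' a b n (n-1)) ^ c / c ≤ K / n := by
  have hc0 : 0 < c := hθ'0.trans hθ'c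
  have hba : (0:ℝ) < b - a := by linarith
  set q : ℝ := 1/θ' with hq_def
  have hq1 : 1 < q := by
    rw [hq_def]
    rw [lt_div_iff₀ hθ'0]
    linarith
  have hq0 : 0 < q := by linarith
  set γ : ℝ := q * (c - 1) with hγ_def
  have hγ0 : γ < 0 := mul_neg_of_pos_of_neg hq0 (by linarith)
  set β : ℝ := q * c - 2 with hβ_def
  have hqc1 : 1 < q * c := by
    rw [hq_def]
    rw [div_mul_eq_mul_div, lt_div_iff₀ hθ'0]
    linarith
  have hβ : -1 < β := by rw [hβ_def]; linarith
  set K₂ : ℝ := 1 + 1/(β+1) with hK₂_def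
  have hβ1 : (0:ℝ) < β + 1 := by linarith
  have hK₂ : 0 < K₂ := by
    have := one_div_pos.mpr hβ1
    rw [hK₂_def]; linarith
  set K₃ : ℝ := (b-a)^c * q * (-γ) * 2^(q-1) with hK₃_def
  have hK₃ : 0 < K₃ := by
    have h1 : (0:ℝ) < (b-a)^c := Real.rpow_pos_of_pos hba c
    have h2 : (0:ℝ) < (2:ℝ)^(q-1) := Real.rpow_pos_of_pos two_pos _
    have h3 : (0:ℝ) < -γ := by linarith
    positivity
  have hbac : (0:ℝ) < (b-a)^c := Real.rpow_pos_of_pos hba c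
  clear_value q γ β K₂ K₃
  refine ⟨K₂*K₃ + (b-a)^c/c, by
    exact add_pos (mul_pos hK₂ hK₃) (div_pos hbac hc0), fun n hn => ?_⟩
  have hn0 : (0:ℝ) < n := by exact_mod_cast hn
  -- abbreviations
  set T : ℕ → ℝ := thetaNet θ' a b n with hT_def
  set x : ℕ → ℝ := fun k => 1 - (k:ℝ)/(n:ℝ) with hx_def
  have hbT : ∀ k : ℕ, b - T k = (b-a) * (x k) ^ q := by
    intro k
    simp only [hT_def, hx_def, hq_def]
    exact thetaNet_sub θ' a b n k
  clear_value T x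
  -- tail term
  have hxn1 : x (n-1) = 1/(n:ℝ) := by
    simp only [hx_def]
    have : ((n-1:ℕ):ℝ) = (n:ℝ) - 1 := by
      push_cast [Nat.cast_sub hn]; ring
    field_simp [this]
    rw [this]; ring
  have htail : (b - T (n-1)) ^ c / c ≤ ((b-a)^c/c) * (1/(n:ℝ)) := by
    rw [hbT, hxn1]
    have h1 : ((b-a) * ((1:ℝ)/n) ^ q) ^ c = (b-a)^c * (((1:ℝ)/n) ^ q) ^ c :=
      Real.mul_rpow hba.le (Real.rpow_nonneg (by positivity) q)
    rw [h1, ← Real.rpow_mul (by positivity : (0:ℝ) ≤ 1/(n:ℝ))]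
    have h2 : ((1:ℝ)/n) ^ (q*c) ≤ ((1:ℝ)/n) ^ (1:ℝ) := by
      apply Real.rpow_le_rpow_of_exponent_ge (by positivity)
      · rw [div_le_one hn0]; exact_mod_cast hn
      · linarith
    rw [Real.rpow_one] at h2
    have h3 : (b-a)^c * ((1:ℝ)/n) ^ (q*c) ≤ (b-a)^c * (1/(n:ℝ)) :=
      mul_le_mul_of_nonneg_left h2 hbac.le
    calc (b-a)^c * ((1:ℝ)/n) ^ (q*c) / c ≤ (b-a)^c * (1/(n:ℝ)) / c := by gcongr
      _ = ((b-a)^c/c) * (1/(n:ℝ)) := by ring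
  -- per-term bound
  have hterm : ∀ k ∈ Finset.Icc 1 (n-1),
      (T k - T (k-1)) * ((b - T k)^(c-1) - (b - T (k-1))^(c-1))
        ≤ K₃/(n:ℝ)^2 * (x k) ^ β := by
    intro k hk
    obtain ⟨hk1, hk2⟩ := Finset.mem_Icc.mp hk
    have hkR : (k:ℝ) ≤ (n:ℝ) - 1 := by
      have h := (Nat.cast_le (α := ℝ)).mpr hk2
      rwa [Nat.cast_sub hn, Nat.cast_one] at h
    have hck : ((k-1:ℕ):ℝ) = (k:ℝ) - 1 := by
      rw [Nat.cast_sub hk1, Nat.cast_one]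
    set z := x k with hz_def
    set y := x (k-1) with hy_def
    clear_value z y
    have hzeq : z = ((n:ℝ) - k)/n := by simp only [hz_def, hx_def]; field_simp
    have hz : 0 < z := by rw [hzeq]; apply div_pos (by linarith) hn0
    have hyz : y - z = 1/(n:ℝ) := by
      simp only [hz_def, hy_def, hx_def, hck]
      field_simp
      ring
    have hzy : z < y := by
      have : (0:ℝ) < 1/(n:ℝ) := by positivity
      linarith
    have hy0 : 0 < y := hz.trans hzy
    have hz1n : 1/(n:ℝ) ≤ z := by
      rw [hzeq]
      gcongr
      · linarith
    have hy2z : y ≤ 2*z := by linarith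
    have h1 : y^q - z^q ≤ q*y^(q-1)*(y-z) := rpow_sub_le_of_one_le hz hzy hq1.le
    have h3 : y^(q-1) ≤ 2^(q-1)*z^(q-1) := by
      calc y^(q-1) ≤ (2*z)^(q-1) := Real.rpow_le_rpow hy0.le hy2z (by linarith)
        _ = 2^(q-1)*z^(q-1) := Real.mul_rpow (by norm_num) hz.le
    have h4 : z^γ - y^γ ≤ (-γ)*z^(γ-1)*(y-z) := rpow_sub_le_of_nonpos hz hzy hγ0.le
    have hGnn : 0 ≤ z^γ - y^γ :=
      sub_nonneg.mpr (Real.rpow_le_rpow_of_nonpos hz hzy.le hγ0.le)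
    have hΔ : T k - T (k-1) = (b-a)*(y^q - z^q) := by
      have e1 := hbT k
      have e2 := hbT (k-1)
      rw [← hz_def] at e1
      rw [← hy_def] at e2
      linear_combination e2 - e1
    have hG : (b - T k)^(c-1) - (b - T (k-1))^(c-1) = (b-a)^(c-1) * (z^γ - y^γ) := by
      rw [hbT k, hbT (k-1), ← hz_def, ← hy_def,
        Real.mul_rpow hba.le (Real.rpow_nonneg hz.le q),
        Real.mul_rpow hba.le (Real.rpow_nonneg hy0.le q),
        ← Real.rpow_mul hz.le, ← Real.rpow_mul hy0.le, ← hγ_def]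
      ring
    have hbc : (b-a)*(b-a)^(c-1) = (b-a)^c := by
      nth_rewrite 1 [← Real.rpow_one (b-a)]
      rw [← Real.rpow_add hba]
      norm_num
    have hexp : (q-1) + (γ-1) = β := by rw [hβ_def, hγ_def]; ring
    have hzb : z^(q-1) * z^(γ-1) = z^β := by rw [← Real.rpow_add hz, hexp]
    have hA'nn : (0:ℝ) ≤ q*y^(q-1)*(y-z) :=
      mul_nonneg (mul_nonneg hq0.le (Real.rpow_nonneg hy0.le _)) (by linarith)
    calc (T k - T (k-1)) * ((b - T k)^(c-1) - (b - T (k-1))^(c-1))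
        = ((b-a)*(b-a)^(c-1)) * ((y^q - z^q) * (z^γ - y^γ)) := by rw [hΔ, hG]; ring
      _ ≤ ((b-a)*(b-a)^(c-1)) * ((q*y^(q-1)*(y-z)) * ((-γ)*z^(γ-1)*(y-z))) := by
          apply mul_le_mul_of_nonneg_left _ (by positivity)
          exact mul_le_mul h1 h4 hGnn hA'nn
      _ = (b-a)^c * (q*(-γ)) * (y^(q-1)*z^(γ-1)) * (1/(n:ℝ))^2 := by
          rw [hyz, hbc]; ring
      _ ≤ (b-a)^c * (q*(-γ)) * ((2^(q-1)*z^(q-1))*z^(γ-1)) * (1/(n:ℝ))^2 := by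
          have hcoef : (0:ℝ) ≤ (b-a)^c * (q*(-γ)) :=
            mul_nonneg hbac.le (mul_nonneg hq0.le (by linarith))
          have hmul : y^(q-1)*z^(γ-1) ≤ (2^(q-1)*z^(q-1))*z^(γ-1) :=
            mul_le_mul_of_nonneg_right h3 (Real.rpow_nonneg hz.le _)
          have := mul_le_mul_of_nonneg_left hmul hcoef
          apply mul_le_mul_of_nonneg_right this (by positivity)
      _ = K₃/(n:ℝ)^2 * z ^ β := by
          rw [hK₃_def]
          rw [mul_assoc (2^(q-1)) (z^(q-1)) (z^(γ-1)), hzb]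
          field_simp
  -- sum of x k ^ β
  have hreindex : ∑ k ∈ Finset.Icc 1 (n-1), (x k) ^ β
      = ∑ j ∈ Finset.Icc 1 (n-1), ((j:ℝ)/(n:ℝ)) ^ β := by
    refine Finset.sum_nbij' (fun k => n - k) (fun j => n - j) ?_ ?_ ?_ ?_ ?_
    · intro a ha
      simp only [Finset.mem_Icc] at *
      omega
    · intro a ha
      simp only [Finset.mem_Icc] at *
      omega
    · intro a ha
      simp only [Finset.mem_Icc] at ha
      show n - (n - a) = a
      omega
    · intro a ha
      simp only [Finset.mem_Icc] at ha
      show n - (n - a) = a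
      omega
    · intro k hk
      simp only [Finset.mem_Icc] at hk
      have : x k = ((n - k : ℕ):ℝ)/(n:ℝ) := by
        simp only [hx_def]
        rw [Nat.cast_sub (by omega : k ≤ n)]
        field_simp
      rw [this]
  have hjsum : ∑ j ∈ Finset.Icc 1 (n-1), ((j:ℝ)/(n:ℝ)) ^ β ≤ K₂ * n := by
    have e1 : ∀ j ∈ Finset.Icc 1 (n-1), ((j:ℝ)/(n:ℝ)) ^ β = (j:ℝ)^β / (n:ℝ)^β :=
      fun j _ => Real.div_rpow (Nat.cast_nonneg j) hn0.le β
    rw [Finset.sum_congr rfl e1, ← Finset.sum_div]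
    have e2 : ∑ j ∈ Finset.Icc 1 (n-1), (j:ℝ)^β ≤ ∑ j ∈ Finset.Icc 1 n, (j:ℝ)^β := by
      apply Finset.sum_le_sum_of_subset_of_nonneg
      · exact Finset.Icc_subset_Icc_right (by omega)
      · intro j _ _
        exact Real.rpow_nonneg (Nat.cast_nonneg j) β
    have e3 := sum_rpow_le hβ n hn
    have hnβ : (0:ℝ) < (n:ℝ)^β := Real.rpow_pos_of_pos hn0 β
    rw [div_le_iff₀ hnβ]
    calc ∑ j ∈ Finset.Icc 1 (n-1), (j:ℝ)^β ≤ K₂ * (n:ℝ)^(β+1) := by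
          rw [hK₂_def]; exact le_trans e2 e3
      _ = K₂ * n * (n:ℝ)^β := by rw [Real.rpow_add_one hn0.ne']; ring
  have hmain : ∑ k ∈ Finset.Icc 1 (n-1),
      (T k - T (k-1)) * ((b - T k)^(c-1) - (b - T (k-1))^(c-1))
        ≤ K₂ * K₃ / n := by
    calc ∑ k ∈ Finset.Icc 1 (n-1),
        (T k - T (k-1)) * ((b - T k)^(c-1) - (b - T (k-1))^(c-1))
        ≤ ∑ k ∈ Finset.Icc 1 (n-1), K₃/(n:ℝ)^2 * (x k) ^ β := Finset.sum_le_sum hterm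
      _ = K₃/(n:ℝ)^2 * ∑ k ∈ Finset.Icc 1 (n-1), (x k) ^ β := by
          rw [Finset.mul_sum]
      _ ≤ K₃/(n:ℝ)^2 * (K₂ * n) := by
          apply mul_le_mul_of_nonneg_left _ (by positivity)
          rw [hreindex]; exact hjsum
      _ = K₂ * K₃ / n := by field_simp
  have := add_le_add hmain htail
  calc (∑ k ∈ Finset.Icc 1 (n-1),
        (T k - T (k-1)) * ((b - T k)^(c-1) - (b - T (k-1))^(c-1)))
        + (b - T (n-1)) ^ c / c
      ≤ K₂ * K₃ / n + ((b-a)^c/c) * (1/(n:ℝ)) := this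
    _ = (K₂*K₃ + (b-a)^c/c) / n := by field_simp

lemma key_bound {Ω : Type*} {mΩ : MeasurableSpace Ω} (μ : Measure Ω)
    {E : Type*} [NormedAddCommGroup E]
    (p : ℝ≥0∞) (a b θ c c₁ : ℝ) (hab : a < b) (hθ1 : θ ≤ 1) (hcθ : c < θ)
    (hc0 : 0 < c) (hc1 : c < 1) (hc₁ : 0 ≤ c₁)
    (Z : ℝ → Ω → E)
    (hZ : ∀ s t : ℝ, a ≤ s → s < t → t < b →
      eLpNorm (Z t - Z s) p μ
        ≤ ENNReal.ofReal (c₁ * (∫ r in s..t, (b - r) ^ (θ - 2)) ^ ((1 : ℝ) / 2))) :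
    ∀ s t : ℝ, a ≤ s → s ≤ t → t < b →
      (eLpNorm (Z t - Z s) p μ) ^ 2
        ≤ ENNReal.ofReal ((c₁^2 * (b-a)^(θ-c) / (1-c)) *
            ((b - t) ^ (c-1) - (b - s) ^ (c-1))) := by
  intro s t has hst htb
  rcases eq_or_lt_of_le hst with rfl | hst'
  · have h0 : Z s - Z s = 0 := sub_self _
    rw [h0, eLpNorm_zero]
    simp only [ne_eq, OfNat.ofNat_ne_zero, not_false_iff, zero_pow]
    exact zero_le
  · have hsb : s < b := hst'.trans htb
    have hbt : (0:ℝ) < b - t := by linarith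
    have hbs : (0:ℝ) < b - s := by linarith
    set I : ℝ := ∫ r in s..t, (b - r) ^ (θ - 2) with hI_def
    have hI : 0 ≤ I := by
      rw [hI_def]
      apply intervalIntegral.integral_nonneg hst
      intro r hr
      exact Real.rpow_nonneg (by linarith [hr.2] : (0:ℝ) ≤ b - r) _
    -- interval integrability
    have hcont : ∀ e : ℝ, ContinuousOn (fun r : ℝ => (b - r) ^ e) (Set.uIcc s t) := by
      intro e
      apply ContinuousOn.rpow_const ((continuous_const.sub continuous_id).continuousOn)
      intro r hr
      rw [Set.uIcc_of_le hst] at hr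
      exact Or.inl (by linarith [hr.2] : b - r ≠ 0)
    have hint1 : IntervalIntegrable (fun r : ℝ => (b - r) ^ (θ - 2)) volume s t :=
      (hcont (θ-2)).intervalIntegrable
    have hint2 : IntervalIntegrable (fun r : ℝ => (b-a)^(θ-c) * (b - r) ^ (c - 2)) volume s t :=
      (((hcont (c-2)).const_smul ((b-a)^(θ-c))).intervalIntegrable)
    -- pointwise comparison
    have hmono : I ≤ ∫ r in s..t, (b-a)^(θ-c) * (b - r) ^ (c - 2) := by
      rw [hI_def]
      apply intervalIntegral.integral_mono_on hst hint1 hint2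
      intro r hr
      have hbr : (0:ℝ) < b - r := by linarith [hr.2]
      have e1 : (b - r) ^ (θ - 2) = (b - r)^(θ - c) * (b - r) ^ (c - 2) := by
        rw [← Real.rpow_add hbr]; ring_nf
      rw [e1]
      apply mul_le_mul_of_nonneg_right _ (Real.rpow_nonneg hbr.le _)
      apply Real.rpow_le_rpow hbr.le (by linarith [hr.1] : b - r ≤ b - a) (by linarith)
    -- compute the c-integral
    have hcomp : (∫ r in s..t, (b - r) ^ (c - 2))
        = ((b - t) ^ (c-1) - (b - s) ^ (c-1)) / (1 - c) := by
      have h1 : (∫ r in s..t, (b - r) ^ (c - 2))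
          = ∫ u in (b-t)..(b-s), u ^ (c-2) :=
        intervalIntegral.integral_comp_sub_left (fun u => u ^ (c-2)) b
      rw [h1, integral_rpow]
      · have : c - 2 + 1 = c - 1 := by ring
        rw [this]
        rw [div_eq_div_iff (sub_ne_zero.mpr (by linarith : c ≠ (1:ℝ))) (sub_ne_zero.mpr (by linarith : (1:ℝ) ≠ c))]
        ring
      · refine Or.inr ⟨by intro h; apply absurd (by linarith : c = 1) hc1.ne, ?_⟩
        exact Set.notMem_uIcc_of_lt hbt hbs
    calc (eLpNorm (Z t - Z s) p μ) ^ 2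
        ≤ (ENNReal.ofReal (c₁ * I ^ ((1:ℝ)/2))) ^ 2 := by
          gcongr
          exact hZ s t has hst' htb
      _ = ENNReal.ofReal ((c₁ * I ^ ((1:ℝ)/2)) ^ 2) := by
          rw [ENNReal.ofReal_pow (by positivity)]
      _ = ENNReal.ofReal (c₁^2 * I) := by
          congr 1
          rw [mul_pow, ← Real.rpow_natCast (I ^ ((1:ℝ)/2)) 2, ← Real.rpow_mul hI]
          norm_num
      _ ≤ ENNReal.ofReal ((c₁^2 * (b-a)^(θ-c) / (1-c)) *
            ((b - t) ^ (c-1) - (b - s) ^ (c-1))) := by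
          apply ENNReal.ofReal_le_ofReal
          have h2 : I ≤ (b-a)^(θ-c) * (((b - t) ^ (c-1) - (b - s) ^ (c-1)) / (1 - c)) := by
            calc I ≤ ∫ r in s..t, (b-a)^(θ-c) * (b - r) ^ (c - 2) := hmono
              _ = (b-a)^(θ-c) * ∫ r in s..t, (b - r) ^ (c - 2) := by
                  rw [intervalIntegral.integral_const_mul]
              _ = (b-a)^(θ-c) * (((b - t) ^ (c-1) - (b - s) ^ (c-1)) / (1 - c)) := by
                  rw [hcomp]
          have h3 : c₁^2 * I ≤ c₁^2 * ((b-a)^(θ-c) * (((b - t) ^ (c-1) - (b - s) ^ (c-1)) / (1 - c))) :=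
            mul_le_mul_of_nonneg_left h2 (by positivity)
          calc c₁^2 * I ≤ _ := h3
            _ = (c₁^2 * (b-a)^(θ-c) / (1-c)) * ((b - t) ^ (c-1) - (b - s) ^ (c-1)) := by
                field_simp

lemma sum_Icc_split {M : Type*} [AddCommMonoid M] (n : ℕ) (h : 1 ≤ n) (f : ℕ → M) :
    ∑ k ∈ Finset.Icc 1 n, f k = (∑ k ∈ Finset.Icc 1 (n-1), f k) + f n := by
  have h2 : n = (n-1)+1 := by omega
  rw [h2, Finset.sum_Icc_succ_top (by omega)]
  congr 2

/-- **Z-part of Corollary 2.3, abstract form.** If `(Z_t)_{t ∈ [a,b)} ⊆ L^p(μ)` is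
`ℝ^d`-valued and satisfies `‖Z_t − Z_s‖_p ≤ c₁ (∫_s^t (b−r)^{θ−2} dr)^{1/2}` for
`a ≤ s < t < b`, then along the `θ'`-nets `(t_k)_{k=0}^n` with `0 < θ' < θ` there is a
constant `C > 0` with
`Σ_{k=1}^n ∫_{t_{k−1}}^{t_k} ‖Z_t − Z_{t_{k−1}}‖_p² dt ≤ C/n` for all `n ≥ 1`
(the `k = n` summand being the integral over `[t_{n−1}, b)`). -/
theorem corollary_2_3_Z_part_abstract
    {Ω : Type*} {mΩ : MeasurableSpace Ω} (μ : Measure Ω) [IsProbabilityMeasure μ]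
    {d : ℕ} (hd : 1 ≤ d)
    (p : ℝ≥0∞) (hp1 : 1 ≤ p) (hp2 : p ≠ ∞)
    (a b θ θ' c₁ : ℝ) (hab : a < b) (hθ : θ ∈ Set.Ioc (0 : ℝ) 1)
    (hθ' : θ' ∈ Set.Ioo (0 : ℝ) θ) (hc₁ : 0 ≤ c₁)
    (Z : ℝ → Ω → EuclideanSpace ℝ (Fin d))
    (hZLp : ∀ t ∈ Set.Ico a b, MemLp (Z t) p μ)
    (hZ : ∀ s t : ℝ, a ≤ s → s < t → t < b →
      eLpNorm (Z t - Z s) p μ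
        ≤ ENNReal.ofReal (c₁ * (∫ r in s..t, (b - r) ^ (θ - 2)) ^ ((1 : ℝ) / 2))) :
    ∃ C : ℝ, 0 < C ∧ ∀ n : ℕ, 1 ≤ n →
      ∑ k ∈ Finset.Icc 1 n,
          ∫⁻ t in Set.Ico (thetaNet θ' a b n (k - 1)) (thetaNet θ' a b n k),
            (eLpNorm (Z t - Z (thetaNet θ' a b n (k - 1))) p μ) ^ 2
        ≤ ENNReal.ofReal (C / n) := by
  obtain ⟨hθ'0, hθ'θ⟩ := hθ'
  obtain ⟨hθ0, hθ1⟩ := hθ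
  have hba : (0:ℝ) < b - a := by linarith
  set c : ℝ := (θ' + θ)/2 with hc_def
  have hθ'c : θ' < c := by rw [hc_def]; linarith
  have hcθ : c < θ := by rw [hc_def]; linarith
  have hc0 : 0 < c := lt_trans hθ'0 hθ'c
  have hc1 : c < 1 := by rw [hc_def]; linarith
  have h1c : (0:ℝ) < 1 - c := by linarith
  set c₂ : ℝ := c₁^2 * (b-a)^(θ-c) / (1-c) with hc₂_def
  have hc₂ : 0 ≤ c₂ := by rw [hc₂_def]; positivity
  clear_value c
  have key := key_bound μ p a b θ c c₁ hab hθ1 hcθ hc0 hc1 hc₁ Z hZ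
  rw [← hc₂_def] at key
  clear_value c₂
  obtain ⟨K, hK, hnet⟩ := net_real_bound a b θ' c hab hθ'0 hθ'c hc1
  refine ⟨c₂ * K + 1, by positivity, fun n hn => ?_⟩
  have hn0 : (0:ℝ) < n := by exact_mod_cast hn
  set T : ℕ → ℝ := thetaNet θ' a b n with hT_def
  set q : ℝ := (1:ℝ)/θ' with hq_def
  have hq0 : 0 < q := by rw [hq_def]; positivity
  have hbT : ∀ k : ℕ, b - T k = (b-a) * (1 - (k:ℝ)/(n:ℝ)) ^ q := by
    intro k
    simp only [hT_def, hq_def]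
    exact thetaNet_sub θ' a b n k
  clear_value T q
  have hxnn : ∀ k : ℕ, k ≤ n → (0:ℝ) ≤ 1 - (k:ℝ)/(n:ℝ) := by
    intro k hk
    have hkn : (k:ℝ) ≤ (n:ℝ) := by exact_mod_cast hk
    rw [sub_nonneg, div_le_one hn0]
    exact hkn
  have hTle : ∀ k l : ℕ, k ≤ l → l ≤ n → T k ≤ T l := by
    intro k l hkl hln
    have hkl' : (k:ℝ) ≤ (l:ℝ) := by exact_mod_cast hkl
    have h1 : (1 - (l:ℝ)/n) ≤ (1 - (k:ℝ)/n) := by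
      have : (k:ℝ)/n ≤ (l:ℝ)/n := by gcongr
      linarith
    have h2 := Real.rpow_le_rpow (hxnn l hln) h1 hq0.le
    have e1 := hbT k
    have e2 := hbT l
    nlinarith [mul_le_mul_of_nonneg_left h2 hba.le]
  have hTltb : ∀ k : ℕ, k < n → T k < b := by
    intro k hk
    have hx : (0:ℝ) < 1 - (k:ℝ)/n := by
      rw [sub_pos, div_lt_one hn0]
      exact_mod_cast hk
    have h2 : 0 < (b-a) * (1 - (k:ℝ)/n)^q := mul_pos hba (Real.rpow_pos_of_pos hx q)
    linarith [hbT k]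
  have hTa : ∀ k : ℕ, k ≤ n → a ≤ T k := by
    intro k hk
    have h1 : (1 - (k:ℝ)/n)^q ≤ 1 := by
      apply Real.rpow_le_one (hxnn k hk) _ hq0.le
      have : (0:ℝ) ≤ (k:ℝ)/n := by positivity
      linarith
    nlinarith [hbT k, mul_le_mul_of_nonneg_left h1 hba.le]
  have hTnb : T n = b := by
    have h := hbT n
    rw [div_self hn0.ne'] at h
    norm_num at h
    rw [Real.zero_rpow hq0.ne'] at h
    linarith
  -- the real per-k bounds
  set B : ℕ → ℝ := fun k =>
    if k = n then c₂ * ((b - T (n-1))^c / c)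
    else c₂ * ((T k - T (k-1)) * ((b - T k)^(c-1) - (b - T (k-1))^(c-1))) with hB_def
  have hGnn : ∀ k : ℕ, 1 ≤ k → k < n →
      0 ≤ (b - T k)^(c-1) - (b - T (k-1))^(c-1) := by
    intro k hk1 hkn
    have hub : T k < b := hTltb k hkn
    have hsu : T (k-1) ≤ T k := hTle (k-1) k (by omega) (by omega)
    refine sub_nonneg.mpr (Real.rpow_le_rpow_of_nonpos (by linarith) (by linarith) (by linarith))
  have hBnn : ∀ k ∈ Finset.Icc 1 n, 0 ≤ B k := by
    intro k hk
    obtain ⟨hk1, hkn⟩ := Finset.mem_Icc.mp hk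
    simp only [hB_def]
    split_ifs with he
    · have hub : T (n-1) < b := hTltb (n-1) (by omega)
      have : 0 ≤ (b - T (n-1))^c := Real.rpow_nonneg (by linarith) c
      positivity
    · have hkn' : k < n := lt_of_le_of_ne hkn he
      have hsu : T (k-1) ≤ T k := hTle (k-1) k (by omega) (by omega)
      exact mul_nonneg hc₂ (mul_nonneg (by linarith) (hGnn k hk1 hkn'))
  have hbound : ∀ k ∈ Finset.Icc 1 n,
      (∫⁻ t in Set.Ico (T (k-1)) (T k), (eLpNorm (Z t - Z (T (k-1))) p μ) ^ 2)
        ≤ ENNReal.ofReal (B k) := by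
    intro k hk
    obtain ⟨hk1, hkn⟩ := Finset.mem_Icc.mp hk
    have hs_a : a ≤ T (k-1) := hTa (k-1) (by omega)
    by_cases he : k = n
    · -- last interval, up to b
      subst he
      have hsb : T (k-1) < b := hTltb (k-1) (by omega)
      rw [hB_def]
      simp only [if_pos rfl]
      have hintb : IntervalIntegrable (fun t : ℝ => c₂ * (b - t)^(c-1)) volume (T (k-1)) b := by
        have h1 := (intervalIntegral.intervalIntegrable_rpow' (by linarith : (-1:ℝ) < c-1)
          (a := b - T (k-1)) (b := b - b)).comp_sub_left b
        have e1 : b - (b - T (k-1)) = T (k-1) := by ring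
        have e2 : b - (b - b) = b := by ring
        rw [e1, e2] at h1
        exact h1.const_mul c₂
      calc ∫⁻ t in Set.Ico (T (k-1)) (T k), (eLpNorm (Z t - Z (T (k-1))) p μ) ^ 2
          = ∫⁻ t in Set.Ico (T (k-1)) b, (eLpNorm (Z t - Z (T (k-1))) p μ) ^ 2 := by
            rw [hTnb]
        _ ≤ ∫⁻ t in Set.Ico (T (k-1)) b, ENNReal.ofReal (c₂ * (b - t)^(c-1)) := by
            apply setLIntegral_mono
            · apply Measurable.ennreal_ofReal
              apply Measurable.const_mul
              exact Measurable.pow (measurable_const.sub measurable_id) measurable_const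
            · intro t ht
              refine (key (T (k-1)) t hs_a ht.1 ht.2).trans ?_
              apply ENNReal.ofReal_le_ofReal
              have h1 : (0:ℝ) ≤ (b - T (k-1))^(c-1) := Real.rpow_nonneg (by linarith) _
              have h2 : (b - t)^(c-1) - (b - T (k-1))^(c-1) ≤ (b - t)^(c-1) := by linarith
              exact mul_le_mul_of_nonneg_left h2 hc₂
        _ = ∫⁻ t in Set.Ioc (T (k-1)) b, ENNReal.ofReal (c₂ * (b - t)^(c-1)) := by
            rw [Measure.restrict_congr_set Ico_ae_eq_Ioc]
        _ = ENNReal.ofReal (∫ t in Set.Ioc (T (k-1)) b, c₂ * (b - t)^(c-1)) := by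
            rw [← ofReal_integral_eq_lintegral_ofReal]
            · exact (intervalIntegrable_iff_integrableOn_Ioc_of_le hsb.le).mp hintb
            · refine Filter.Eventually.mono (ae_restrict_mem measurableSet_Ioc) ?_
              intro t ht
              simp only [Pi.zero_apply]
              exact mul_nonneg hc₂ (Real.rpow_nonneg (by linarith [ht.2]) _)
        _ = ENNReal.ofReal (c₂ * ((b - T (k-1))^c / c)) := by
            congr 1
            rw [← intervalIntegral.integral_of_le hsb.le,
              intervalIntegral.integral_const_mul]
            congr 1
            have h1 : (∫ t in (T (k-1))..b, (b - t)^(c-1))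
                = ∫ u in (b - b)..(b - T (k-1)), u^(c-1) :=
              intervalIntegral.integral_comp_sub_left (fun u => u ^ (c-1)) b
            rw [h1, sub_self, integral_rpow (Or.inl (by linarith : (-1:ℝ) < c - 1))]
            rw [show c - 1 + 1 = c by ring, Real.zero_rpow hc0.ne']
            ring
    · -- inner interval
      have hkn' : k < n := lt_of_le_of_ne hkn he
      have hub : T k < b := hTltb k hkn'
      have hsu : T (k-1) ≤ T k := hTle (k-1) k (by omega) (by omega)
      rw [hB_def]
      simp only [if_neg he]
      calc ∫⁻ t in Set.Ico (T (k-1)) (T k), (eLpNorm (Z t - Z (T (k-1))) p μ) ^ 2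
          ≤ ∫⁻ _t in Set.Ico (T (k-1)) (T k),
              ENNReal.ofReal (c₂ * ((b - T k)^(c-1) - (b - T (k-1))^(c-1))) := by
            apply setLIntegral_mono measurable_const
            intro t ht
            refine (key (T (k-1)) t hs_a ht.1 (ht.2.trans hub)).trans ?_
            apply ENNReal.ofReal_le_ofReal
            have h1 : (b - t)^(c-1) ≤ (b - T k)^(c-1) :=
              Real.rpow_le_rpow_of_nonpos (by linarith) (by linarith [ht.2]) (by linarith)
            exact mul_le_mul_of_nonneg_left (by linarith) hc₂
        _ = ENNReal.ofReal (c₂ * ((b - T k)^(c-1) - (b - T (k-1))^(c-1)))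
              * volume (Set.Ico (T (k-1)) (T k)) := setLIntegral_const _ _
        _ = ENNReal.ofReal (c₂ * ((T k - T (k-1)) * ((b - T k)^(c-1) - (b - T (k-1))^(c-1)))) := by
            rw [Real.volume_Ico, ← ENNReal.ofReal_mul
              (mul_nonneg hc₂ (hGnn k hk1 hkn'))]
            congr 1
            ring
  -- assemble
  calc ∑ k ∈ Finset.Icc 1 n,
        ∫⁻ t in Set.Ico (T (k-1)) (T k), (eLpNorm (Z t - Z (T (k-1))) p μ) ^ 2
      ≤ ∑ k ∈ Finset.Icc 1 n, ENNReal.ofReal (B k) := Finset.sum_le_sum hbound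
    _ = ENNReal.ofReal (∑ k ∈ Finset.Icc 1 n, B k) := (ENNReal.ofReal_sum_of_nonneg hBnn).symm
    _ ≤ ENNReal.ofReal ((c₂ * K + 1) / n) := by
        apply ENNReal.ofReal_le_ofReal
        have hsplit := sum_Icc_split n hn B
        have hBn : B n = c₂ * ((b - T (n-1))^c / c) := by rw [hB_def]; simp
        have hBk : ∀ k ∈ Finset.Icc 1 (n-1),
            B k = c₂ * ((T k - T (k-1)) * ((b - T k)^(c-1) - (b - T (k-1))^(c-1))) := by
          intro k hk
          obtain ⟨hk1, hk2⟩ := Finset.mem_Icc.mp hk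
          rw [hB_def]
          simp only [if_neg (by omega : k ≠ n)]
        rw [hsplit, Finset.sum_congr rfl hBk, hBn]
        have e1 : (∑ k ∈ Finset.Icc 1 (n-1),
              c₂ * ((T k - T (k-1)) * ((b - T k)^(c-1) - (b - T (k-1))^(c-1))))
            + c₂ * ((b - T (n-1))^c / c)
            = c₂ * ((∑ k ∈ Finset.Icc 1 (n-1),
              (T k - T (k-1)) * ((b - T k)^(c-1) - (b - T (k-1))^(c-1)))
              + (b - T (n-1))^c / c) := by
          rw [← Finset.mul_sum]
          ring
        rw [e1]
        have h2 := hnet n hn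
        rw [← hT_def] at h2
        calc c₂ * ((∑ k ∈ Finset.Icc 1 (n-1),
              (T k - T (k-1)) * ((b - T k)^(c-1) - (b - T (k-1))^(c-1)))
              + (b - T (n-1))^c / c)
            ≤ c₂ * (K / n) := mul_le_mul_of_nonneg_left h2 hc₂
          _ ≤ (c₂ * K + 1) / n := by
              rw [← mul_div_assoc]
              gcongr
              linarith
end

section
/- Let (Ω, ℱ, μ) be a probability space, 1 ≤ p < ∞, a < b, θ ∈ (0,1], θ' ∈ (0,θ], and c₃ ≥ 0. Let (Y_t)_{t∈[a,b]} be a family of real random variables in L^p(μ) with ‖Y_t − Y_s‖_p ≤ c₃ (∫_s^t (b−r)^{θ−1} dr)^{1/2} for all a ≤ s < t ≤ b. For n ≥ 1 let (t_k)_{k=0}^n be the θ'-net on [a,b]. Then for all n ≥ 1, all k ∈ {1, …, n} and all t ∈ (t_{k−1}, t_k] one has ‖Y_t − Y_{t_{k−1}}‖_p ≤ c₃ (b−a)^{θ/2} (θ')^{−1/2} n^{−1/2}. -/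
open MeasureTheory
open scoped ENNReal

lemma aux_rpow_sub_rpow_le {α : ℝ} (hα : 1 ≤ α) {x y : ℝ} (hy : 0 ≤ y) (hyx : y ≤ x)
    (hx : x ≤ 1) : x ^ α - y ^ α ≤ α * (x - y) := by
  have hmono : MonotoneOn (fun z : ℝ => α * z - z ^ α) (Set.Icc 0 1) := by
    apply monotoneOn_of_deriv_nonneg (convex_Icc 0 1)
    · apply Continuous.continuousOn
      exact (continuous_const.mul continuous_id).sub
        (Real.continuous_rpow_const (by linarith))
    · intro z hz
      rw [interior_Icc] at hz
      have hd : HasDerivAt (fun z : ℝ => α * z - z ^ α) (α * 1 - α * z ^ (α - 1)) z :=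
        ((hasDerivAt_id z).const_mul α).sub (Real.hasDerivAt_rpow_const (Or.inr hα))
      exact hd.differentiableAt.differentiableWithinAt
    · intro z hz
      rw [interior_Icc] at hz
      have hd : HasDerivAt (fun z : ℝ => α * z - z ^ α) (α * 1 - α * z ^ (α - 1)) z :=
        ((hasDerivAt_id z).const_mul α).sub (Real.hasDerivAt_rpow_const (Or.inr hα))
      rw [hd.deriv]
      have hz1 : z ^ (α - 1) ≤ 1 := Real.rpow_le_one hz.1.le hz.2.le (by linarith)
      nlinarith [hz1, hα]
  have h := hmono (Set.mem_Icc.mpr ⟨hy, le_trans hyx hx⟩) (Set.mem_Icc.mpr ⟨hy.trans hyx, hx⟩) hyx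
  simp only at h
  linarith

lemma aux_integral {θ b s t : ℝ} (hθ : 0 < θ) :
    (∫ r in s..t, (b - r) ^ (θ - 1)) = ((b - s) ^ θ - (b - t) ^ θ) / θ := by
  rw [show (∫ r in s..t, (b - r) ^ (θ - 1)) = ∫ r in s..t, (fun x : ℝ => x ^ (θ - 1)) (b - r)
    from rfl, intervalIntegral.integral_comp_sub_left (fun x : ℝ => x ^ (θ - 1)) b,
    integral_rpow (Or.inl (by linarith)), sub_add_cancel]

/-- **Y-part of Corollary 2.3, abstract form.** If `(Y_t)_{t ∈ [a,b]} ⊆ L^p(μ)`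
satisfies `‖Y_t − Y_s‖_p ≤ c₃ (∫_s^t (b−r)^{θ−1} dr)^{1/2}` for `a ≤ s < t ≤ b`, then
along the `θ'`-nets `(t_k)_{k=0}^n` with `0 < θ' ≤ θ` one has, for all `n ≥ 1`,
`1 ≤ k ≤ n` and `t ∈ (t_{k−1}, t_k]`,
`‖Y_t − Y_{t_{k−1}}‖_p ≤ c₃ (b−a)^{θ/2} (θ')^{−1/2} n^{−1/2}`. -/
theorem corollary_2_3_Y_part_abstract
    {Ω : Type*} {mΩ : MeasurableSpace Ω} (μ : Measure Ω) [IsProbabilityMeasure μ]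
    (p : ℝ≥0∞) (hp1 : 1 ≤ p) (hp2 : p ≠ ∞)
    (a b θ θ' c₃ : ℝ) (hab : a < b) (hθ : θ ∈ Set.Ioc (0 : ℝ) 1)
    (hθ' : θ' ∈ Set.Ioc (0 : ℝ) θ) (hc₃ : 0 ≤ c₃)
    (Y : ℝ → Ω → ℝ)
    (hY_Lp : ∀ t ∈ Set.Icc a b, MemLp (Y t) p μ)
    (hY : ∀ s t : ℝ, a ≤ s → s < t → t ≤ b →
      eLpNorm (Y t - Y s) p μ
        ≤ ENNReal.ofReal (c₃ * (∫ r in s..t, (b - r) ^ (θ - 1)) ^ ((1 : ℝ) / 2)))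
    (n : ℕ) (hn : 1 ≤ n) (k : ℕ) (hk1 : 1 ≤ k) (hk2 : k ≤ n)
    (t : ℝ) (ht : t ∈ Set.Ioc (thetaNet θ' a b n (k - 1)) (thetaNet θ' a b n k)) :
    eLpNorm (Y t - Y (thetaNet θ' a b n (k - 1))) p μ
      ≤ ENNReal.ofReal
          (c₃ * (b - a) ^ (θ / 2) * θ' ^ (-(1 : ℝ) / 2) * (n : ℝ) ^ (-(1 : ℝ) / 2)) := by
  obtain ⟨hθ0, hθ1⟩ := hθ
  obtain ⟨hθ'0, hθ'θ⟩ := hθ'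
  have hn0 : (0 : ℝ) < n := by positivity
  have hba : (0 : ℝ) < b - a := by linarith
  set s := thetaNet θ' a b n (k - 1) with hs_def
  set tk := thetaNet θ' a b n k with htk_def
  obtain ⟨hts, httk⟩ := ht
  set x : ℝ := 1 - ((k - 1 : ℕ) : ℝ) / n with hx_def
  set y : ℝ := 1 - (k : ℝ) / n with hy_def
  have hkcast : ((k - 1 : ℕ) : ℝ) = (k : ℝ) - 1 := by
    push_cast [Nat.cast_sub hk1]; ring
  have hy0 : 0 ≤ y := by
    rw [hy_def]
    have h1 : (k : ℝ) ≤ n := by exact_mod_cast hk2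
    have h2 := div_le_one_of_le₀ h1 hn0.le
    linarith
  have hyx : y ≤ x := by
    rw [hx_def, hy_def, hkcast]
    have : ((k : ℝ) - 1) / n ≤ (k : ℝ) / n := by gcongr; linarith
    linarith
  have hx0 : 0 ≤ x := hy0.trans hyx
  have hx1 : x ≤ 1 := by
    rw [hx_def]
    have : 0 ≤ ((k - 1 : ℕ) : ℝ) / n := by positivity
    linarith
  have hxy : x - y = 1 / n := by
    rw [hx_def, hy_def, hkcast]
    field_simp; ring
  have he0 : 0 < 1 / θ' := by positivity
  have hbs : b - s = (b - a) * x ^ ((1 : ℝ) / θ') := by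
    rw [hs_def, thetaNet, hx_def]; ring
  have hbtk : b - tk = (b - a) * y ^ ((1 : ℝ) / θ') := by
    rw [htk_def, thetaNet, hy_def]; ring
  have hxe1 : x ^ ((1 : ℝ) / θ') ≤ 1 := Real.rpow_le_one hx0 hx1 he0.le
  have hsa : a ≤ s := by nlinarith [hxe1, hbs]
  have hbtk0 : 0 ≤ b - tk := by
    rw [hbtk]; positivity
  have htb : t ≤ b := by linarith
  have hbt0 : 0 ≤ b - t := by linarith
  refine le_trans (hY s t hsa hts htb) (ENNReal.ofReal_le_ofReal ?_)
  set α : ℝ := θ / θ' with hα_def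
  have hα1 : 1 ≤ α := (one_le_div hθ'0).mpr hθ'θ
  have hI : (∫ r in s..t, (b - r) ^ (θ - 1)) = ((b - s) ^ θ - (b - t) ^ θ) / θ :=
    aux_integral hθ0
  have hpow : ∀ u : ℝ, 0 ≤ u → ((b - a) * u ^ ((1 : ℝ) / θ')) ^ θ = (b - a) ^ θ * u ^ α := by
    intro u hu
    rw [Real.mul_rpow hba.le (Real.rpow_nonneg hu _), ← Real.rpow_mul hu]
    congr 1
    rw [hα_def]
    field_simp
  have hbsθ : (b - s) ^ θ = (b - a) ^ θ * x ^ α := by rw [hbs, hpow x hx0]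
  have hbtkθ : (b - tk) ^ θ = (b - a) ^ θ * y ^ α := by rw [hbtk, hpow y hy0]
  have hkey : x ^ α - y ^ α ≤ α * (x - y) := aux_rpow_sub_rpow_le hα1 hy0 hyx hx1
  have hmono_t : (b - tk) ^ θ ≤ (b - t) ^ θ := Real.rpow_le_rpow hbtk0 (by linarith) hθ0.le
  set M : ℝ := (b - a) ^ θ * θ'⁻¹ * (n : ℝ)⁻¹ with hM_def
  have hIM : (∫ r in s..t, (b - r) ^ (θ - 1)) ≤ M := by
    rw [hI]
    have h1 : ((b - s) ^ θ - (b - t) ^ θ) / θ ≤ ((b - s) ^ θ - (b - tk) ^ θ) / θ := by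
      gcongr
    have h2 : ((b - s) ^ θ - (b - tk) ^ θ) / θ ≤ M := by
      rw [hbsθ, hbtkθ, hM_def]
      have h3 : (b - a) ^ θ * x ^ α - (b - a) ^ θ * y ^ α ≤ (b - a) ^ θ * (α * (1 / n)) := by
        calc (b - a) ^ θ * x ^ α - (b - a) ^ θ * y ^ α = (b - a) ^ θ * (x ^ α - y ^ α) := by ring
          _ ≤ (b - a) ^ θ * (α * (x - y)) :=
              mul_le_mul_of_nonneg_left hkey (Real.rpow_nonneg hba.le θ)
          _ = (b - a) ^ θ * (α * (1 / n)) := by rw [hxy]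
      have hθne : θ ≠ 0 := ne_of_gt hθ0
      have heq : (b - a) ^ θ * (α * (1 / n)) / θ = (b - a) ^ θ * θ'⁻¹ * (n : ℝ)⁻¹ := by
        rw [hα_def]; field_simp
      calc ((b - a) ^ θ * x ^ α - (b - a) ^ θ * y ^ α) / θ
          ≤ (b - a) ^ θ * (α * (1 / n)) / θ := by gcongr
        _ = _ := heq
    linarith
  have hI0 : 0 ≤ (∫ r in s..t, (b - r) ^ (θ - 1)) := by
    rw [hI]
    have h4 : (b - t) ^ θ ≤ (b - s) ^ θ := Real.rpow_le_rpow hbt0 (by linarith) hθ0.le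
    apply div_nonneg _ hθ0.le
    linarith
  have hM0 : 0 ≤ M := by rw [hM_def]; positivity
  have hhalf : (∫ r in s..t, (b - r) ^ (θ - 1)) ^ ((1:ℝ)/2) ≤ M ^ ((1:ℝ)/2) :=
    Real.rpow_le_rpow hI0 hIM (by norm_num)
  have hMval : M ^ ((1:ℝ)/2)
      = (b - a) ^ (θ / 2) * θ' ^ (-(1 : ℝ) / 2) * (n : ℝ) ^ (-(1 : ℝ) / 2) := by
    rw [hM_def, Real.mul_rpow (by positivity) (by positivity),
        Real.mul_rpow (by positivity) (by positivity),
        ← Real.rpow_neg_one θ', ← Real.rpow_neg_one (n : ℝ),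
        ← Real.rpow_mul hθ'0.le, ← Real.rpow_mul hn0.le,
        ← Real.rpow_mul hba.le,
        show θ * (1 / 2) = θ / 2 by ring,
        show (-1 : ℝ) * (1 / 2) = -(1 : ℝ) / 2 by norm_num]
  calc c₃ * (∫ r in s..t, (b - r) ^ (θ - 1)) ^ ((1:ℝ)/2)
      ≤ c₃ * M ^ ((1:ℝ)/2) := mul_le_mul_of_nonneg_left hhalf hc₃
    _ = c₃ * (b - a) ^ (θ / 2) * θ' ^ (-(1 : ℝ) / 2) * (n : ℝ) ^ (-(1 : ℝ) / 2) := by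
        rw [hMval]; ring
end
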